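/- arXiv:2504.09951 — 7 statements merged into one kernel-verified Lean document; each statement's English description precedes it below -/
import Mathlib

section
/- Under the stochastic subgradient oracle model with constants B, G > 0 and anchor x₀ ∈ X, let the projected stochastic Halpern iteration be run with parameters satisfying β_k ∈ (0, 1/2] and 0 < τ_k ≤ √(β_k(1−β_k))/(√6·B). Then for every k ≥ 0 and every X-valued random point x that is measurable with respect to ω₀, …, ω_{k−1} (in particular any deterministic x ∈ X), almost surely: 2τ_k·(f(x_k) − f(x)) + E_k‖x_{k+1} − x‖² ≤ (1−β_k)‖x_k − x‖² + β_k‖x₀ − x‖² + β_k·G²/(3B²). -/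
open MeasureTheory
open scoped RealInnerProductSpace

section helpers
variable {E : Type*} [NormedAddCommGroup E] [InnerProductSpace ℝ E]

/-- obtuse angle property of the metric projection -/
lemma proj_obtuse {X : Set E} (hXconv : Convex ℝ X)
    {proj : E → E} (hprojX : ∀ u, proj u ∈ X)
    (hproj : ∀ u, ∀ y ∈ X, ‖proj u - u‖ ≤ ‖y - u‖) :
    ∀ u, ∀ z ∈ X, ⟪u - proj u, z - proj u⟫ ≤ 0 := by
  intro u z hz
  refine (norm_eq_iInf_iff_real_inner_le_zero hXconv (hprojX u)).mp ?_ z hz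
  haveI : Nonempty X := ⟨⟨proj u, hprojX u⟩⟩
  apply le_antisymm
  · exact le_ciInf fun w => by
      rw [norm_sub_rev]
      simpa [norm_sub_rev] using hproj u w w.2
  · have := ciInf_le (f := fun w : X => ‖u - (w : E)‖)
      ⟨0, fun _ ⟨_, h⟩ => h ▸ norm_nonneg _⟩ ⟨proj u, hprojX u⟩
    simpa using this

lemma proj_sq_le {X : Set E} (hXconv : Convex ℝ X)
    {proj : E → E} (hprojX : ∀ u, proj u ∈ X)
    (hproj : ∀ u, ∀ y ∈ X, ‖proj u - u‖ ≤ ‖y - u‖) :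
    ∀ u, ∀ z ∈ X, ‖proj u - z‖ ^ 2 ≤ ‖u - z‖ ^ 2 := by
  intro u z hz
  have h1 := proj_obtuse hXconv hprojX hproj u z hz
  have e : u - z = (u - proj u) + (proj u - z) := by abel
  have := norm_add_sq_real (u - proj u) (proj u - z)
  rw [← e] at this
  have h2 : ⟪u - proj u, proj u - z⟫ = -⟪u - proj u, z - proj u⟫ := by
    rw [show proj u - z = -(z - proj u) by abel, inner_neg_right]
  nlinarith [sq_nonneg ‖u - proj u‖]

lemma proj_lipschitz {X : Set E} (hXconv : Convex ℝ X)
    {proj : E → E} (hprojX : ∀ u, proj u ∈ X)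
    (hproj : ∀ u, ∀ y ∈ X, ‖proj u - u‖ ≤ ‖y - u‖) :
    LipschitzWith 1 proj := by
  refine LipschitzWith.of_dist_le_mul fun u v => ?_
  rw [dist_eq_norm, dist_eq_norm, NNReal.coe_one, one_mul]
  have h1 := proj_obtuse hXconv hprojX hproj u (proj v) (hprojX v)
  have h2 := proj_obtuse hXconv hprojX hproj v (proj u) (hprojX u)
  have key : ‖proj u - proj v‖ ^ 2 ≤ ⟪u - v, proj u - proj v⟫ := by
    have e : u - v = (u - proj u) + (proj u - proj v) + (proj v - v) := by abel
    rw [e, inner_add_left, inner_add_left, real_inner_self_eq_norm_sq]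
    have e1 : ⟪u - proj u, proj u - proj v⟫ = -⟪u - proj u, proj v - proj u⟫ := by
      rw [show proj u - proj v = -(proj v - proj u) by abel, inner_neg_right]
    have e2 : ⟪proj v - v, proj u - proj v⟫ = -⟪v - proj v, proj u - proj v⟫ := by
      rw [show proj v - v = -(v - proj v) by abel, inner_neg_left]
    linarith
  have hcs := real_inner_le_norm (u - v) (proj u - proj v)
  rcases eq_or_lt_of_le (norm_nonneg (proj u - proj v)) with h0 | h0
  · rw [← h0]; exact norm_nonneg _
  · nlinarith

lemma amgm_div (a b κ : ℝ) (hκ : 0 < κ) : 2 * a * b ≤ κ * a ^ 2 + b ^ 2 / κ := by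
  rw [← sub_nonneg]
  have : κ * a ^ 2 + b ^ 2 / κ - 2 * a * b = (κ * a - b) ^ 2 / κ := by
    field_simp; ring
  rw [this]
  positivity

end helpers

set_option maxHeartbeats 2000000 in
/-- One-iteration inequality for the projected stochastic Halpern iteration
under the Blum–Gladyshev assumption (BG-0).  The iterate after `k` steps is a
function of the first `k` i.i.d. samples; `E_k`, the conditional expectation
given `ω₀, …, ω_{k-1}`, is realized as the integral over the fresh sample. -/
theorem halpern_sgd_one_iteration
    {d : ℕ} {Ω : Type*} [MeasurableSpace Ω] (μ : Measure Ω) [IsProbabilityMeasure μ]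
    (X : Set (EuclideanSpace ℝ (Fin d))) (hXne : X.Nonempty) (hXcl : IsClosed X)
    (hXconv : Convex ℝ X)
    (f : EuclideanSpace ℝ (Fin d) → ℝ) (hfconv : ConvexOn ℝ Set.univ f)
    -- metric projection onto `X`
    (proj : EuclideanSpace ℝ (Fin d) → EuclideanSpace ℝ (Fin d))
    (hprojX : ∀ u, proj u ∈ X)
    (hproj : ∀ u, ∀ y ∈ X, ‖proj u - u‖ ≤ ‖y - u‖)
    (x₀ : EuclideanSpace ℝ (Fin d)) (hx₀ : x₀ ∈ X)
    (B G : ℝ) (hB : 0 < B) (hG : 0 < G)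
    -- stochastic subgradient oracle: unbiased and satisfying (BG-0)
    (g : EuclideanSpace ℝ (Fin d) → Ω → EuclideanSpace ℝ (Fin d))
    (hgmeas : Measurable (Function.uncurry g))
    (hgL2 : ∀ x, MemLp (g x) 2 μ)
    (hunbiased : ∀ x y, f x + ⟪∫ ω, g x ω ∂μ, y - x⟫ ≤ f y)
    (hBG : ∀ x, ∫ ω, ‖g x ω‖ ^ 2 ∂μ ≤ B ^ 2 * ‖x - x₀‖ ^ 2 + G ^ 2)
    -- parameters
    (β τ : ℕ → ℝ)
    (hβ : ∀ k, β k ∈ Set.Ioc (0 : ℝ) (1 / 2))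
    (hτpos : ∀ k, 0 < τ k)
    (hτle : ∀ k, τ k ≤ Real.sqrt (β k * (1 - β k)) / (Real.sqrt 6 * B))
    -- the projected stochastic Halpern iteration
    (x : (k : ℕ) → (Fin k → Ω) → EuclideanSpace ℝ (Fin d))
    (hx0 : ∀ w, x 0 w = x₀)
    (hxrec : ∀ k (w : Fin (k + 1) → Ω),
      x (k + 1) w = proj (β k • x₀ + (1 - β k) • x k (Fin.init w)
        - τ k • g (x k (Fin.init w)) (w (Fin.last k))))
    (k : ℕ)
    -- an `X`-valued point measurable with respect to `ω₀, …, ω_{k-1}`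
    (xx : (Fin k → Ω) → EuclideanSpace ℝ (Fin d))
    (hxxmeas : Measurable xx) (hxxX : ∀ w, xx w ∈ X) :
    ∀ᵐ w ∂(Measure.pi fun _ : Fin k => μ),
      2 * τ k * (f (x k w) - f (xx w))
          + ∫ ω, ‖x (k + 1) (Fin.snoc w ω) - xx w‖ ^ 2 ∂μ
        ≤ (1 - β k) * ‖x k w - xx w‖ ^ 2 + β k * ‖x₀ - xx w‖ ^ 2
          + β k * G ^ 2 / (3 * B ^ 2) := by
  obtain ⟨hβ0, hβ2⟩ := hβ k
  have hβ1 : β k < 1 := lt_of_le_of_lt hβ2 (by norm_num)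
  have h1β : 0 < 1 - β k := by linarith
  have hτ0 := hτpos k
  have hτ2 : (τ k) ^ 2 ≤ β k * (1 - β k) / (6 * B ^ 2) := by
    have hnn : 0 ≤ β k * (1 - β k) := mul_nonneg hβ0.le h1β.le
    have h2 := pow_le_pow_left₀ hτ0.le (hτle k) 2
    calc (τ k) ^ 2 ≤ (Real.sqrt (β k * (1 - β k)) / (Real.sqrt 6 * B)) ^ 2 := h2
      _ = β k * (1 - β k) / (6 * B ^ 2) := by
          rw [div_pow, mul_pow, Real.sq_sqrt hnn, Real.sq_sqrt (by norm_num : (0:ℝ) ≤ 6)]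
  refine Filter.Eventually.of_forall fun w => ?_
  set y := x k w with hy
  set z := xx w with hz
  have hzX : z ∈ X := hxxX w
  set c := β k • x₀ + (1 - β k) • y with hc
  set u : Ω → EuclideanSpace ℝ (Fin d) := fun ω => c - τ k • g y ω with hu
  have hstep : ∀ ω, x (k + 1) (Fin.snoc w ω) = proj (u ω) := by
    intro ω
    rw [hxrec k (Fin.snoc w ω), Fin.init_snoc, Fin.snoc_last]
  -- integrability facts
  have hgI : Integrable (g y) μ := (hgL2 y).integrable one_le_two
  have hgsq : Integrable (fun ω => ‖g y ω‖ ^ 2) μ := ((hgL2 y).norm).integrable_sq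
  have huL2 : MemLp u 2 μ := (memLp_const c).sub ((hgL2 y).const_smul (τ k))
  have huz2 : Integrable (fun ω => ‖u ω - z‖ ^ 2) μ :=
    ((huL2.sub (memLp_const z)).norm).integrable_sq
  have hlip := proj_lipschitz hXconv hprojX hproj
  have hprojAE : AEStronglyMeasurable (fun ω => proj (u ω)) μ :=
    hlip.continuous.comp_aestronglyMeasurable huL2.aestronglyMeasurable
  have hsqle : ∀ ω, ‖proj (u ω) - z‖ ^ 2 ≤ ‖u ω - z‖ ^ 2 := fun ω =>
    proj_sq_le hXconv hprojX hproj (u ω) z hzX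
  have hP2 : Integrable (fun ω => ‖proj (u ω) - z‖ ^ 2) μ := by
    refine huz2.mono' ?_ ?_
    · exact (continuous_pow 2).comp_aestronglyMeasurable
        (hprojAE.sub aestronglyMeasurable_const).norm
    · exact Filter.Eventually.of_forall fun ω => by
        rw [Real.norm_eq_abs, abs_of_nonneg (by positivity)]
        exact hsqle ω
  set gbar := ∫ ω, g y ω ∂μ with hgbar
  set M := ∫ ω, ‖g y ω‖ ^ 2 ∂μ with hMdef
  have hM0 : 0 ≤ M := integral_nonneg fun ω => by positivity
  have hMle : M ≤ B ^ 2 * ‖y - x₀‖ ^ 2 + G ^ 2 := hBG y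
  -- expansion of the squared norm
  have hexp : ∀ ω, ‖u ω - z‖ ^ 2
      = ‖c - z‖ ^ 2 - 2 * τ k * ⟪c - z, g y ω⟫ + (τ k) ^ 2 * ‖g y ω‖ ^ 2 := by
    intro ω
    have e : u ω - z = (c - z) - τ k • g y ω := by simp only [hu]; abel
    rw [e, norm_sub_sq_real, real_inner_smul_right, norm_smul]
    simp only [Real.norm_eq_abs, mul_pow, sq_abs]
    ring
  have i1 : Integrable (fun ω => ⟪c - z, g y ω⟫) μ := hgI.const_inner (c - z)
  have hIu : ∫ ω, ‖u ω - z‖ ^ 2 ∂μ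
      = ‖c - z‖ ^ 2 - 2 * τ k * ⟪c - z, gbar⟫ + (τ k) ^ 2 * M := by
    calc ∫ ω, ‖u ω - z‖ ^ 2 ∂μ
        = ∫ ω, (‖c - z‖ ^ 2 - 2 * τ k * ⟪c - z, g y ω⟫ + (τ k) ^ 2 * ‖g y ω‖ ^ 2) ∂μ :=
          integral_congr_ae (Filter.Eventually.of_forall fun ω => hexp ω)
      _ = (∫ ω, (‖c - z‖ ^ 2 - 2 * τ k * ⟪c - z, g y ω⟫) ∂μ)
            + ∫ ω, (τ k) ^ 2 * ‖g y ω‖ ^ 2 ∂μ :=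
          integral_add ((integrable_const _).sub (i1.const_mul _)) (hgsq.const_mul _)
      _ = ((∫ _, ‖c - z‖ ^ 2 ∂μ) - ∫ ω, 2 * τ k * ⟪c - z, g y ω⟫ ∂μ) + (τ k) ^ 2 * M := by
          rw [integral_sub (integrable_const _) (i1.const_mul _), integral_const_mul,
            integral_const_mul]
      _ = ‖c - z‖ ^ 2 - 2 * τ k * ⟪c - z, gbar⟫ + (τ k) ^ 2 * M := by
          rw [integral_const_mul, integral_inner hgI, integral_const]
          simp [measure_univ, hgbar]
  -- subgradient inequality
  have hsub : f y - f z ≤ ⟪y - z, gbar⟫ := by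
    have h := hunbiased y z
    have e : ⟪gbar, z - y⟫ = -⟪y - z, gbar⟫ := by
      rw [real_inner_comm, show z - y = -(y - z) by abel, inner_neg_left]
    rw [hgbar] at e ⊢
    linarith
  have hczsplit : ⟪c - z, gbar⟫ = ⟪y - z, gbar⟫ - β k * ⟪y - x₀, gbar⟫ := by
    have e : c - z = (y - z) - β k • (y - x₀) := by
      rw [hc]; module
    rw [e, inner_sub_left, real_inner_smul_left]
  -- AM-GM (integrated)
  set K := (1 + β k) / (1 - β k) with hK
  have hK0 : 0 < K := by positivity
  have hamgm : 2 * τ k * β k * ⟪y - x₀, gbar⟫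
      ≤ K * (τ k) ^ 2 * M + (β k) ^ 2 * ‖y - x₀‖ ^ 2 / K := by
    have hpt : ∀ ω, 2 * τ k * β k * ⟪y - x₀, g y ω⟫
        ≤ K * (τ k) ^ 2 * ‖g y ω‖ ^ 2 + (β k) ^ 2 * ‖y - x₀‖ ^ 2 / K := by
      intro ω
      have hcs : ⟪y - x₀, g y ω⟫ ≤ ‖y - x₀‖ * ‖g y ω‖ := real_inner_le_norm _ _
      have ham := amgm_div (τ k * ‖g y ω‖) (β k * ‖y - x₀‖) K hK0
      have h1 := mul_le_mul_of_nonneg_left hcs (by positivity : (0:ℝ) ≤ 2 * τ k * β k)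
      calc 2 * τ k * β k * ⟪y - x₀, g y ω⟫
          ≤ 2 * τ k * β k * (‖y - x₀‖ * ‖g y ω‖) := h1
        _ = 2 * (τ k * ‖g y ω‖) * (β k * ‖y - x₀‖) := by ring
        _ ≤ K * (τ k * ‖g y ω‖) ^ 2 + (β k * ‖y - x₀‖) ^ 2 / K := ham
        _ = K * (τ k) ^ 2 * ‖g y ω‖ ^ 2 + (β k) ^ 2 * ‖y - x₀‖ ^ 2 / K := by ring
    have hint1 : Integrable (fun ω => 2 * τ k * β k * ⟪y - x₀, g y ω⟫) μ :=
      (hgI.const_inner (y - x₀)).const_mul _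
    have hint2 : Integrable
        (fun ω => K * (τ k) ^ 2 * ‖g y ω‖ ^ 2 + (β k) ^ 2 * ‖y - x₀‖ ^ 2 / K) μ :=
      (hgsq.const_mul _).add (integrable_const _)
    have hIm := integral_mono hint1 hint2 hpt
    calc 2 * τ k * β k * ⟪y - x₀, gbar⟫
        = ∫ ω, 2 * τ k * β k * ⟪y - x₀, g y ω⟫ ∂μ := by
          rw [integral_const_mul, integral_inner hgI]
      _ ≤ ∫ ω, (K * (τ k) ^ 2 * ‖g y ω‖ ^ 2 + (β k) ^ 2 * ‖y - x₀‖ ^ 2 / K) ∂μ := hIm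
      _ = K * (τ k) ^ 2 * M + (β k) ^ 2 * ‖y - x₀‖ ^ 2 / K := by
          rw [integral_add (hgsq.const_mul _) (integrable_const _), integral_const_mul,
            integral_const]
          simp [measure_univ, hMdef]
  -- strong convexity identity for the convex combination
  have hcid : ‖c - z‖ ^ 2 = β k * ‖x₀ - z‖ ^ 2 + (1 - β k) * ‖y - z‖ ^ 2
      - β k * (1 - β k) * ‖y - x₀‖ ^ 2 := by
    have e1 : c - z = β k • (x₀ - z) + (1 - β k) • (y - z) := by
      rw [hc]; module
    have e3 : ‖y - x₀‖ ^ 2 = ‖x₀ - z‖ ^ 2 - 2 * ⟪x₀ - z, y - z⟫ + ‖y - z‖ ^ 2 := by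
      rw [show y - x₀ = -((x₀ - z) - (y - z)) by abel, norm_neg, norm_sub_sq_real]
    rw [e1, norm_add_sq_real, real_inner_smul_left, real_inner_smul_right,
      norm_smul, norm_smul, Real.norm_eq_abs, Real.norm_eq_abs, abs_of_pos hβ0,
      abs_of_pos h1β, mul_pow, mul_pow, e3]
    ring
  -- parameter inequalities
  have hKτ : (K + 1) * (τ k) ^ 2 ≤ β k / (3 * B ^ 2) := by
    have e : K + 1 = 2 / (1 - β k) := by
      rw [hK]; field_simp; ring
    rw [e, div_mul_eq_mul_div, div_le_div_iff₀ h1β (by positivity)]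
    have h6 : (τ k) ^ 2 * (6 * B ^ 2) ≤ β k * (1 - β k) := by
      rw [← le_div_iff₀ (by positivity)]; exact hτ2
    linarith [h6]
  have hfrac : (β k) ^ 2 * ‖y - x₀‖ ^ 2 / K
      ≤ β k * (1 - β k) * ‖y - x₀‖ ^ 2 - β k * ‖y - x₀‖ ^ 2 / 3 := by
    rw [hK, div_div_eq_mul_div, div_le_iff₀ (by positivity : (0:ℝ) < 1 + β k)]
    nlinarith [mul_nonneg (mul_nonneg hβ0.le (by linarith : (0:ℝ) ≤ 2 - 4 * β k))
      (sq_nonneg ‖y - x₀‖), sq_nonneg ‖y - x₀‖]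
  -- assembling
  have hmono : ∫ ω, ‖proj (u ω) - z‖ ^ 2 ∂μ ≤ ∫ ω, ‖u ω - z‖ ^ 2 ∂μ :=
    integral_mono hP2 huz2 hsqle
  have h2τ : (0:ℝ) ≤ 2 * τ k := by linarith
  have hsub2 : 2 * τ k * (f y - f z) ≤ 2 * τ k * ⟪y - z, gbar⟫ :=
    mul_le_mul_of_nonneg_left hsub h2τ
  have hKM : (K + 1) * (τ k) ^ 2 * M ≤ β k / (3 * B ^ 2) * M :=
    mul_le_mul_of_nonneg_right hKτ hM0
  have hMexp : β k / (3 * B ^ 2) * M ≤ β k * ‖y - x₀‖ ^ 2 / 3 + β k * G ^ 2 / (3 * B ^ 2) := by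
    have h1 : β k / (3 * B ^ 2) * M ≤ β k / (3 * B ^ 2) * (B ^ 2 * ‖y - x₀‖ ^ 2 + G ^ 2) :=
      mul_le_mul_of_nonneg_left hMle (by positivity)
    have h2 : β k / (3 * B ^ 2) * (B ^ 2 * ‖y - x₀‖ ^ 2 + G ^ 2)
        = β k * ‖y - x₀‖ ^ 2 / 3 + β k * G ^ 2 / (3 * B ^ 2) := by
      field_simp
    linarith
  simp only [hstep]
  nlinarith [hmono, hIu, hczsplit, hsub2, hamgm, hKM, hMexp, hfrac, hcid]
end

section
/- Under the stochastic subgradient oracle model with constants B, G > 0 and anchor x₀ ∈ X, assume f attains its minimum over X at x* ∈ X, and run the projected stochastic Halpern iteration with β_k = 1/(k+2) and τ_k = √(k+1)/(√6·B·(k+2)). Then the iterates remain bounded in mean square: for every K ≥ 0, E‖x_K − x*‖² ≤ ‖x₀ − x*‖² + G²/(3B²). -/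
open MeasureTheory
open scoped RealInnerProductSpace

section AuxHilbert

variable {F : Type*} [NormedAddCommGroup F] [InnerProductSpace ℝ F]

private lemma combo_norm_sq (t : ℝ) (a b : F) :
    ‖t • a + (1 - t) • b‖ ^ 2
      = t * ‖a‖ ^ 2 + (1 - t) * ‖b‖ ^ 2 - t * (1 - t) * ‖a - b‖ ^ 2 := by
  have h2 : ‖a - b‖ ^ 2 = ‖a‖ ^ 2 - 2 * ⟪a, b⟫ + ‖b‖ ^ 2 := norm_sub_sq_real a b
  have h1 : ‖t • a + (1 - t) • b‖ ^ 2
      = ‖t • a‖ ^ 2 + 2 * ⟪t • a, (1 - t) • b⟫ + ‖(1 - t) • b‖ ^ 2 := norm_add_sq_real _ _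
  rw [h1, real_inner_smul_left, real_inner_smul_right, norm_smul, norm_smul,
    Real.norm_eq_abs, Real.norm_eq_abs, mul_pow, mul_pow, sq_abs, sq_abs]
  linear_combination (t * (1 - t)) * h2

private lemma expand_norm_sq (t : ℝ) (w z : F) :
    ‖w - t • z‖ ^ 2 = ‖w‖ ^ 2 - 2 * t * ⟪w, z⟫ + t ^ 2 * ‖z‖ ^ 2 := by
  rw [norm_sub_sq_real, real_inner_smul_right, norm_smul, Real.norm_eq_abs, mul_pow, sq_abs]
  ring

private lemma proj_var {X : Set F} (hXconv : Convex ℝ X)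
    (proj : F → F) (hprojX : ∀ u, proj u ∈ X)
    (hproj : ∀ u, ∀ y ∈ X, ‖proj u - u‖ ≤ ‖y - u‖)
    (u : F) {y : F} (hy : y ∈ X) : ⟪u - proj u, y - proj u⟫ ≤ 0 := by
  set p := proj u with hp
  set v := y - p with hv
  have key : ∀ t : ℝ, 0 < t → t ≤ 1 → 0 ≤ 2 * ⟪p - u, v⟫ + t * ‖v‖ ^ 2 := by
    intro t ht0 ht1
    have hmem : (1 - t) • p + t • y ∈ X :=
      hXconv (hprojX u) hy (by linarith) (le_of_lt ht0) (by ring)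
    have h := hproj u _ hmem
    have heq : (1 - t) • p + t • y - u = (p - u) + t • v := by
      rw [hv]; rw [sub_smul, one_smul, smul_sub]; abel
    rw [heq] at h
    have hsq := pow_le_pow_left₀ (norm_nonneg _) h 2
    rw [norm_add_sq_real, real_inner_smul_right, norm_smul, Real.norm_eq_abs, mul_pow,
      sq_abs] at hsq
    nlinarith [hsq, ht0]
  have hgoal : 0 ≤ ⟪p - u, v⟫ := by
    by_contra hneg
    push_neg at hneg
    by_cases hv0 : ‖v‖ ^ 2 = 0
    · have h := key 1 one_pos le_rfl
      rw [hv0] at h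
      linarith
    · have hvpos : 0 < ‖v‖ ^ 2 := lt_of_le_of_ne (sq_nonneg _) (Ne.symm hv0)
      set t := min 1 (-⟪p - u, v⟫ / ‖v‖ ^ 2) with htdef
      have ht0 : 0 < t := lt_min one_pos (div_pos (neg_pos.mpr hneg) hvpos)
      have ht1 : t ≤ 1 := min_le_left _ _
      have h := key t ht0 ht1
      have htle : t * ‖v‖ ^ 2 ≤ -⟪p - u, v⟫ := by
        have hm := min_le_right 1 (-⟪p - u, v⟫ / ‖v‖ ^ 2)
        calc t * ‖v‖ ^ 2 ≤ (-⟪p - u, v⟫ / ‖v‖ ^ 2) * ‖v‖ ^ 2 :=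
              mul_le_mul_of_nonneg_right hm hvpos.le
          _ = -⟪p - u, v⟫ := div_mul_cancel₀ _ hvpos.ne'
      linarith
  have hs : ⟪u - p, v⟫ = -⟪p - u, v⟫ := by rw [← inner_neg_left, neg_sub]
  rw [hv] at hs hgoal ⊢
  linarith [hs, hgoal]

private lemma proj_nonexpansive {X : Set F} (hXconv : Convex ℝ X)
    (proj : F → F) (hprojX : ∀ u, proj u ∈ X)
    (hproj : ∀ u, ∀ y ∈ X, ‖proj u - u‖ ≤ ‖y - u‖)
    (u w : F) : ‖proj u - proj w‖ ≤ ‖u - w‖ := by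
  set p := proj u with hp
  set r := proj w with hr
  have h1 : ⟪u - p, r - p⟫ ≤ 0 := proj_var hXconv proj hprojX hproj u (hprojX w)
  have h2 : ⟪w - r, p - r⟫ ≤ 0 := proj_var hXconv proj hprojX hproj w (hprojX u)
  have hdec : u - w = (u - p) + (p - r) + (r - w) := by abel
  have e1 : ⟪u - w, p - r⟫ = ⟪u - p, p - r⟫ + ⟪p - r, p - r⟫ + ⟪r - w, p - r⟫ := by
    rw [hdec, inner_add_left, inner_add_left]
  have e2 : ⟪u - p, p - r⟫ = -⟪u - p, r - p⟫ := by rw [← inner_neg_right, neg_sub]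
  have e3 : ⟪r - w, p - r⟫ = -⟪w - r, p - r⟫ := by rw [← inner_neg_left, neg_sub]
  have e4 : ⟪p - r, p - r⟫ = ‖p - r‖ ^ 2 := real_inner_self_eq_norm_sq _
  have e5 : ⟪u - w, p - r⟫ ≤ ‖u - w‖ * ‖p - r‖ := real_inner_le_norm _ _
  have hmain : ‖p - r‖ ^ 2 ≤ ‖u - w‖ * ‖p - r‖ := by linarith [e1, e2, e3, e4, e5, h1, h2]
  rcases eq_or_lt_of_le (norm_nonneg (p - r)) with h0 | h0
  · rw [← h0]; exact norm_nonneg _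
  · have := le_of_mul_le_mul_right (by nlinarith [hmain] : ‖p - r‖ * ‖p - r‖ ≤ ‖u - w‖ * ‖p - r‖) h0
    exact this

end AuxHilbert

private lemma norm_integral_sq_le {Ω : Type*} [MeasurableSpace Ω] (μ : Measure Ω)
    [IsProbabilityMeasure μ] {F : Type*} [NormedAddCommGroup F] [InnerProductSpace ℝ F]
    [CompleteSpace F] {gf : Ω → F} (h : MemLp gf 2 μ) :
    ‖∫ a, gf a ∂μ‖ ^ 2 ≤ ∫ a, ‖gf a‖ ^ 2 ∂μ := by
  set c := ∫ a, gf a ∂μ with hc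
  have hint : Integrable gf μ := h.integrable one_le_two
  have hsq : Integrable (fun a => ‖gf a‖ ^ 2) μ :=
    (memLp_two_iff_integrable_sq_norm h.aestronglyMeasurable).mp h
  have h1 : ∫ a, ⟪c, gf a⟫ ∂μ = ‖c‖ ^ 2 := by
    rw [integral_inner hint, real_inner_self_eq_norm_sq]
  have h2 : ∫ a, ⟪c, gf a⟫ ∂μ ≤ ∫ a, (‖c‖ ^ 2 / 2 + ‖gf a‖ ^ 2 / 2) ∂μ := by
    apply integral_mono (Integrable.const_inner c hint)
      ((integrable_const _).add (hsq.div_const 2))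
    intro a
    have hi := real_inner_le_norm c (gf a)
    have hs := sq_nonneg (‖c‖ - ‖gf a‖)
    simp only [Pi.add_apply]
    nlinarith
  have h3 : ∫ a, (‖c‖ ^ 2 / 2 + ‖gf a‖ ^ 2 / 2) ∂μ
      = ‖c‖ ^ 2 / 2 + (∫ a, ‖gf a‖ ^ 2 ∂μ) / 2 := by
    rw [integral_add (integrable_const _) (hsq.div_const 2), integral_const, integral_div]
    simp [measure_univ]
  rw [h3, h1] at h2
  linarith

set_option maxHeartbeats 1000000 in
private lemma budget_real (B G m s u q : ℝ) (hB : 0 < B) (hG : 0 < G) (hq : 0 ≤ q)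
    (hm : 1 ≤ m) (hs0 : 0 ≤ s) (hs2 : s^2 = m) (hu0 : 0 < u) (hu2 : u^2 = 6)
    (hcase : 2 ≤ m ∨ q = 0) :
    -((1/(m+1)) * (1 - 1/(m+1))) * q^2
      + 2 * (s/(u*B*(m+1))) * (1/(m+1)) * q * (B*q+G)
      + (s/(u*B*(m+1)))^2 * (B^2*q^2+G^2)
      ≤ (1/(m+1)) * (G^2/(3*B^2)) := by
  have hm1pos : (0:ℝ) < m + 1 := by linarith
  have hτsq : (s/(u*B*(m+1)))^2 = m/(6*B^2*(m+1)^2) := by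
    rw [div_pow, hs2, mul_pow, mul_pow, hu2]
  have hτlin : s/(u*B*(m+1)) = u*s/(6*B*(m+1)) := by
    rw [div_eq_div_iff (by positivity) (by positivity)]
    linear_combination (-(s*B*(m+1)))*hu2
  rw [hτsq, hτlin]
  have husq : (u*s)^2 = 6*m := by rw [mul_pow, hu2, hs2]
  have hus0 : 0 ≤ u*s := mul_nonneg hu0.le hs0
  have key : 0 ≤ (5*m - 2*(u*s))*(B*q)^2 + (m+2)*G^2 - 2*(u*s)*(B*q)*G := by
    rcases hcase with hm2 | hq0
    · have ha : 0 < 5*m - 2*(u*s) := by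
        nlinarith [husq, hus0, hm2, sq_nonneg (2*(u*s) - 5*m)]
      have h24 : (2*(u*s)*(m+2))^2 = 24*m*(m+2)^2 := by
        rw [mul_pow, mul_pow, husq]; ring
      have hkey2 : 2*(u*s)*(m+2) ≤ 5*m^2+4*m := by
        apply le_of_pow_le_pow_left₀ two_ne_zero (by nlinarith)
        rw [h24]
        nlinarith [hm2, mul_nonneg (mul_nonneg (by linarith : (0:ℝ) ≤ m)
          (by linarith : (0:ℝ) ≤ m - 2)) (by nlinarith : (0:ℝ) ≤ 25*m^2+66*m+52)]
      have h6m : (u*s)^2 ≤ (5*m-2*(u*s))*(m+2) := by rw [husq]; nlinarith [hkey2]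
      nlinarith [sq_nonneg ((5*m-2*(u*s))*(B*q) - (u*s)*G),
        mul_le_mul_of_nonneg_right h6m (sq_nonneg G), ha, sq_nonneg (B*q)]
    · rw [hq0]
      have hG2 : 0 ≤ G^2 := sq_nonneg G
      nlinarith [hG2, hm]
  have hΔ : (0:ℝ) < 6*B^2*(m+1)^2 := by positivity
  have E2 : -((1/(m+1))*(1-1/(m+1)))*q^2 + 2*(u*s/(6*B*(m+1)))*(1/(m+1))*q*(B*q+G)
        + m/(6*B^2*(m+1)^2)*(B^2*q^2+G^2)
      = 1/(m+1)*(G^2/(3*B^2))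
        - ((5*m - 2*(u*s))*(B*q)^2 + (m+2)*G^2 - 2*(u*s)*(B*q)*G)/(6*B^2*(m+1)^2) := by
    field_simp
    ring
  linarith [E2, div_nonneg key hΔ.le]

private lemma budget (B G : ℝ) (hB : 0 < B) (hG : 0 < G) (k : ℕ) (q : ℝ) (hq : 0 ≤ q)
    (hcase : 1 ≤ k ∨ q = 0) :
    -((1/((k:ℝ)+2)) * (1 - 1/((k:ℝ)+2))) * q^2
      + 2 * (Real.sqrt ((k:ℝ)+1) / (Real.sqrt 6 * B * ((k:ℝ)+2))) * (1/((k:ℝ)+2)) * q * (B*q+G)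
      + (Real.sqrt ((k:ℝ)+1) / (Real.sqrt 6 * B * ((k:ℝ)+2)))^2 * (B^2*q^2+G^2)
      ≤ (1/((k:ℝ)+2)) * (G^2/(3*B^2)) := by
  have hk0 : (0:ℝ) ≤ (k:ℝ) := Nat.cast_nonneg k
  have hm1 : (k:ℝ) + 2 = ((k:ℝ) + 1) + 1 := by ring
  rw [hm1]
  refine budget_real B G ((k:ℝ)+1) (Real.sqrt ((k:ℝ)+1)) (Real.sqrt 6) q hB hG hq
    (by linarith) (Real.sqrt_nonneg _) (Real.sq_sqrt (by linarith))
    (Real.sqrt_pos.mpr (by norm_num)) (Real.sq_sqrt (by norm_num)) ?_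
  rcases hcase with hk | hq0
  · left
    have h1 : (1:ℝ) ≤ (k:ℝ) := by exact_mod_cast hk
    linarith
  · right; exact hq0

set_option maxHeartbeats 2000000 in
/-- Mean-square boundedness of the iterates of the projected stochastic Halpern iteration under (BG-0). -/
theorem halpern_sgd_iterates_bounded
    {d : ℕ} {Ω : Type*} [MeasurableSpace Ω] (μ : Measure Ω) [IsProbabilityMeasure μ]
    (X : Set (EuclideanSpace ℝ (Fin d))) (hXne : X.Nonempty) (hXcl : IsClosed X)
    (hXconv : Convex ℝ X)
    (f : EuclideanSpace ℝ (Fin d) → ℝ) (hfconv : ConvexOn ℝ Set.univ f)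
    (proj : EuclideanSpace ℝ (Fin d) → EuclideanSpace ℝ (Fin d))
    (hprojX : ∀ u, proj u ∈ X)
    (hproj : ∀ u, ∀ y ∈ X, ‖proj u - u‖ ≤ ‖y - u‖)
    (x₀ : EuclideanSpace ℝ (Fin d)) (hx₀ : x₀ ∈ X)
    (B G : ℝ) (hB : 0 < B) (hG : 0 < G)
    (g : EuclideanSpace ℝ (Fin d) → Ω → EuclideanSpace ℝ (Fin d))
    (hgmeas : Measurable (Function.uncurry g))
    (hgL2 : ∀ x, MemLp (g x) 2 μ)
    (hunbiased : ∀ x y, f x + ⟪∫ ω, g x ω ∂μ, y - x⟫ ≤ f y)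
    (hBG : ∀ x, ∫ ω, ‖g x ω‖ ^ 2 ∂μ ≤ B ^ 2 * ‖x - x₀‖ ^ 2 + G ^ 2)
    (xstar : EuclideanSpace ℝ (Fin d)) (hxstarX : xstar ∈ X)
    (hxstarmin : ∀ y ∈ X, f xstar ≤ f y)
    (β τ : ℕ → ℝ)
    (hβ : ∀ k, β k = 1 / ((k : ℝ) + 2))
    (hτ : ∀ k, τ k = Real.sqrt ((k : ℝ) + 1) / (Real.sqrt 6 * B * ((k : ℝ) + 2)))
    (x : (k : ℕ) → (Fin k → Ω) → EuclideanSpace ℝ (Fin d))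
    (hxmeas : ∀ k, Measurable (x k))
    (hx0 : ∀ w, x 0 w = x₀)
    (hxrec : ∀ k (w : Fin (k + 1) → Ω),
      x (k + 1) w = proj (β k • x₀ + (1 - β k) • x k (Fin.init w)
        - τ k • g (x k (Fin.init w)) (w (Fin.last k)))) :
    ∀ K : ℕ,
      ∫ w, ‖x K w - xstar‖ ^ 2 ∂(Measure.pi fun _ : Fin K => μ)
        ≤ ‖x₀ - xstar‖ ^ 2 + G ^ 2 / (3 * B ^ 2) := by
  -- notation
  have hCpos : (0:ℝ) < G ^ 2 / (3 * B ^ 2) := by positivity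
  -- membership of iterates
  have hmemX : ∀ K (v : Fin K → Ω), x K v ∈ X := by
    intro K
    induction K with
    | zero => intro v; rw [hx0]; exact hx₀
    | succ k ih => intro v; rw [hxrec]; exact hprojX _
  -- projection facts
  have hfix : ∀ y ∈ X, proj y = y := by
    intro y hy
    have h := hproj y y hy
    rw [sub_self, norm_zero] at h
    have := norm_le_zero_iff.mp h
    exact sub_eq_zero.mp this
  have hnonexp : ∀ u w, ‖proj u - proj w‖ ≤ ‖u - w‖ :=
    proj_nonexpansive hXconv proj hprojX hproj
  have hprojdist : ∀ u, ‖proj u - xstar‖ ≤ ‖u - xstar‖ := by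
    intro u
    have h := hnonexp u xstar
    rwa [hfix xstar hxstarX] at h
  have hprojcont : Continuous proj := by
    apply (LipschitzWith.of_dist_le_mul (K := 1) ?_).continuous
    intro a b
    rw [dist_eq_norm, dist_eq_norm]
    simpa using hnonexp a b
  have hprojmeas : Measurable proj := hprojcont.measurable
  -- parameter facts
  have hβval : ∀ k : ℕ, 0 < β k ∧ β k < 1 := by
    intro k
    rw [hβ]
    constructor
    · positivity
    · rw [div_lt_one (by positivity)]
      have : (0:ℝ) ≤ (k:ℝ) := Nat.cast_nonneg k
      linarith
  have hτpos : ∀ k : ℕ, 0 < τ k := by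
    intro k
    rw [hτ]
    have h1 : 0 < Real.sqrt ((k:ℝ)+1) := Real.sqrt_pos.mpr (by positivity)
    have h2 : 0 < Real.sqrt 6 := Real.sqrt_pos.mpr (by norm_num)
    have : (0:ℝ) ≤ (k:ℝ) := Nat.cast_nonneg k
    positivity
  -- main induction
  have main : ∀ K : ℕ,
      Integrable (fun v => ‖x K v - xstar‖ ^ 2) (Measure.pi fun _ : Fin K => μ) ∧
      ∫ v, ‖x K v - xstar‖ ^ 2 ∂(Measure.pi fun _ : Fin K => μ)
        ≤ ‖x₀ - xstar‖ ^ 2 + G ^ 2 / (3 * B ^ 2) := by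
    intro K
    induction K with
    | zero =>
      constructor
      · simp only [hx0]
        exact integrable_const _
      · simp only [hx0]
        rw [integral_const]
        simp [measure_univ]
        linarith [hCpos]
    | succ K IH =>
      obtain ⟨IHint, IHle⟩ := IH
      have hβ0 := (hβval K).1
      have hβ1 := (hβval K).2
      have hτ0 := hτpos K
      -- integrability of squared distance to anchor
      have hxKmeas : Measurable (x K) := hxmeas K
      have hint0 : Integrable (fun v => ‖x K v - x₀‖ ^ 2) (Measure.pi fun _ : Fin K => μ) := by
        apply Integrable.mono' ((IHint.const_mul 2).add (integrable_const (2 * ‖xstar - x₀‖ ^ 2)))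
        · exact (((hxKmeas.sub measurable_const).norm).pow_const 2).aestronglyMeasurable
        · filter_upwards with v
          rw [Real.norm_eq_abs, abs_of_nonneg (sq_nonneg _)]
          have htri : ‖x K v - x₀‖ ≤ ‖x K v - xstar‖ + ‖xstar - x₀‖ := by
            have := dist_triangle (x K v) xstar x₀
            simpa [dist_eq_norm] using this
          simp only [Pi.add_apply]
          have h2 : ‖x K v - x₀‖ ^ 2 ≤ (‖x K v - xstar‖ + ‖xstar - x₀‖) ^ 2 :=
            pow_le_pow_left₀ (norm_nonneg _) htri 2
          nlinarith [h2, sq_nonneg (‖x K v - xstar‖ - ‖xstar - x₀‖)]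
      -- the two functions on the product space
      set Φ : Ω × (Fin K → Ω) → ℝ :=
        fun p => ‖((β K • x₀ + (1 - β K) • x K p.2) - xstar) - τ K • g (x K p.2) p.1‖ ^ 2
        with hΦdef
      set P : Ω × (Fin K → Ω) → ℝ :=
        fun p => ‖proj (β K • x₀ + (1 - β K) • x K p.2 - τ K • g (x K p.2) p.1) - xstar‖ ^ 2
        with hPdef
      -- measurability
      have hgm2 : Measurable (fun p : Ω × (Fin K → Ω) => g (x K p.2) p.1) :=
        hgmeas.comp ((hxKmeas.comp measurable_snd).prodMk measurable_fst)
      have hcmbmeas : Measurable (fun v => β K • x₀ + (1 - β K) • x K v) :=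
        measurable_const.add (hxKmeas.const_smul (1 - β K))
      have hargmeas : Measurable
          (fun p : Ω × (Fin K → Ω) => β K • x₀ + (1 - β K) • x K p.2 - τ K • g (x K p.2) p.1) :=
        (hcmbmeas.comp measurable_snd).sub (hgm2.const_smul (τ K))
      have hΦmeas : Measurable Φ := by
        rw [hΦdef]
        exact ((((hcmbmeas.comp measurable_snd).sub measurable_const).sub
          (hgm2.const_smul (τ K))).norm).pow_const 2
      have hPmeas : Measurable P := by
        rw [hPdef]
        exact (((hprojmeas.comp hargmeas).sub measurable_const).norm).pow_const 2
      -- L² facts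
      have hyL2 : MemLp (fun v => x K v - xstar) 2 (Measure.pi fun _ : Fin K => μ) :=
        (memLp_two_iff_integrable_sq_norm
          (hxKmeas.sub measurable_const).aestronglyMeasurable).mpr IHint
      have hsndMP : MeasurePreserving (Prod.snd : Ω × (Fin K → Ω) → (Fin K → Ω))
          (μ.prod (Measure.pi fun _ : Fin K => μ)) (Measure.pi fun _ : Fin K => μ) := by
        constructor
        · exact measurable_snd
        · rw [Measure.map_snd_prod]; simp [measure_univ]
      have hcmbL2 : MemLp (fun v => (β K • x₀ + (1 - β K) • x K v) - xstar) 2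
          (Measure.pi fun _ : Fin K => μ) := by
        have hrw : (fun v => (β K • x₀ + (1 - β K) • x K v) - xstar)
            = fun v => (1 - β K) • (x K v - xstar) + (β K • x₀ - β K • xstar) := by
          funext v
          module
        rw [hrw]
        exact (hyL2.const_smul (1 - β K)).add (memLp_const _)
      have hcmbL2' : MemLp (fun p : Ω × (Fin K → Ω) => (β K • x₀ + (1 - β K) • x K p.2) - xstar) 2
          (μ.prod (Measure.pi fun _ : Fin K => μ)) := by
        have := hcmbL2.comp_measurePreserving hsndMP
        exact this
      have hgsq_slice : ∀ z : EuclideanSpace ℝ (Fin d), Integrable (fun a => ‖g z a‖ ^ 2) μ :=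
        fun z => (memLp_two_iff_integrable_sq_norm (hgL2 z).aestronglyMeasurable).mp (hgL2 z)
      have hgint_prod : Integrable (fun p : Ω × (Fin K → Ω) => ‖g (x K p.2) p.1‖ ^ 2)
          (μ.prod (Measure.pi fun _ : Fin K => μ)) := by
        refine (integrable_prod_iff' (μ := μ) (ν := Measure.pi fun _ : Fin K => μ)
          ((hgm2.norm.pow_const 2).aestronglyMeasurable)).mpr ⟨?_, ?_⟩
        · exact Filter.Eventually.of_forall fun v => hgsq_slice (x K v)
        · apply Integrable.mono' ((hint0.const_mul (B ^ 2)).add (integrable_const (G ^ 2)))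
          · exact (((hgm2.norm.pow_const 2).norm.stronglyMeasurable.integral_prod_left')).aestronglyMeasurable
          · filter_upwards with v
            have hnn : 0 ≤ ∫ a, ‖(‖g (x K v) a‖ ^ 2)‖ ∂μ := integral_nonneg fun a => norm_nonneg _
            rw [Real.norm_eq_abs, abs_of_nonneg hnn]
            have heq : ∫ a, ‖(‖g (x K v) a‖ ^ 2)‖ ∂μ = ∫ a, ‖g (x K v) a‖ ^ 2 ∂μ := by
              apply integral_congr_ae
              filter_upwards with a
              rw [Real.norm_eq_abs, abs_of_nonneg (sq_nonneg _)]
            rw [heq]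
            simpa using hBG (x K v)
      have hg2L2 : MemLp (fun p : Ω × (Fin K → Ω) => g (x K p.2) p.1) 2
          (μ.prod (Measure.pi fun _ : Fin K => μ)) :=
        (memLp_two_iff_integrable_sq_norm hgm2.aestronglyMeasurable).mpr hgint_prod
      have hΦint : Integrable Φ (μ.prod (Measure.pi fun _ : Fin K => μ)) := by
        have hL2 : MemLp (fun p : Ω × (Fin K → Ω) =>
            ((β K • x₀ + (1 - β K) • x K p.2) - xstar) - τ K • g (x K p.2) p.1) 2
            (μ.prod (Measure.pi fun _ : Fin K => μ)) :=
          hcmbL2'.sub (hg2L2.const_smul (τ K))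
        have := (memLp_two_iff_integrable_sq_norm
          ((((hcmbmeas.comp measurable_snd).sub measurable_const).sub
            (hgm2.const_smul (τ K))).aestronglyMeasurable)).mp hL2
        rw [hΦdef]
        exact this
      -- pointwise conditional bound
      have hΦnn : ∀ p, 0 ≤ Φ p := fun p => by simp only [hΦdef]; positivity
      have cond : ∀ v : Fin K → Ω,
          (∫ a, Φ (a, v) ∂μ) ≤ β K * ‖x₀ - xstar‖ ^ 2
            + (1 - β K) * ‖x K v - xstar‖ ^ 2 + β K * (G ^ 2 / (3 * B ^ 2)) := by
        intro v
        simp only [hΦdef]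
        have hyX : x K v ∈ X := hmemX K v
        have hgbar_le : ‖∫ a, g (x K v) a ∂μ‖ ≤ B * ‖x K v - x₀‖ + G := by
          have h1 : ‖∫ a, g (x K v) a ∂μ‖ ^ 2 ≤ ∫ a, ‖g (x K v) a‖ ^ 2 ∂μ :=
            norm_integral_sq_le μ (hgL2 (x K v))
          have h2 := hBG (x K v)
          have h3 : ‖∫ a, g (x K v) a ∂μ‖ ^ 2 ≤ (B * ‖x K v - x₀‖ + G) ^ 2 := by
            nlinarith [mul_nonneg (mul_nonneg hB.le (norm_nonneg (x K v - x₀))) hG.le]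
          exact le_of_pow_le_pow_left₀ two_ne_zero (by positivity) h3
        have hip : 0 ≤ ⟪x K v - xstar, ∫ a, g (x K v) a ∂μ⟫ := by
          have h1 := hunbiased (x K v) xstar
          have h2 := hxstarmin (x K v) hyX
          have h3 : ⟪∫ a, g (x K v) a ∂μ, xstar - x K v⟫ ≤ 0 := by linarith
          have h4 : ⟪x K v - xstar, ∫ a, g (x K v) a ∂μ⟫
              = -⟪∫ a, g (x K v) a ∂μ, xstar - x K v⟫ := by
            rw [real_inner_comm, ← inner_neg_right, neg_sub]
          linarith [h4, h3]
        have hgint : Integrable (fun a => g (x K v) a) μ := (hgL2 (x K v)).integrable one_le_two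
        have hiInt : Integrable
            (fun a => ⟪(β K • x₀ + (1 - β K) • x K v) - xstar, g (x K v) a⟫) μ :=
          Integrable.const_inner _ hgint
        have hexp : ∫ a, ‖((β K • x₀ + (1 - β K) • x K v) - xstar) - τ K • g (x K v) a‖ ^ 2 ∂μ
            = ‖(β K • x₀ + (1 - β K) • x K v) - xstar‖ ^ 2
              - 2 * τ K * ⟪(β K • x₀ + (1 - β K) • x K v) - xstar, ∫ a, g (x K v) a ∂μ⟫
              + τ K ^ 2 * ∫ a, ‖g (x K v) a‖ ^ 2 ∂μ := by
          have hptw : ∀ a : Ω,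
              ‖((β K • x₀ + (1 - β K) • x K v) - xstar) - τ K • g (x K v) a‖ ^ 2
              = (‖(β K • x₀ + (1 - β K) • x K v) - xstar‖ ^ 2
                 - 2 * τ K * ⟪(β K • x₀ + (1 - β K) • x K v) - xstar, g (x K v) a⟫)
                + τ K ^ 2 * ‖g (x K v) a‖ ^ 2 := fun a => expand_norm_sq _ _ _
          rw [integral_congr_ae (Filter.Eventually.of_forall hptw)]
          have int1 : Integrable (fun a : Ω =>
              2 * τ K * ⟪(β K • x₀ + (1 - β K) • x K v) - xstar, g (x K v) a⟫) μ :=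
            hiInt.const_mul (2 * τ K)
          have int2 : Integrable (fun a : Ω =>
              ‖(β K • x₀ + (1 - β K) • x K v) - xstar‖ ^ 2
                - 2 * τ K * ⟪(β K • x₀ + (1 - β K) • x K v) - xstar, g (x K v) a⟫) μ :=
            (integrable_const _).sub int1
          have int3 : Integrable (fun a : Ω => τ K ^ 2 * ‖g (x K v) a‖ ^ 2) μ :=
            (hgsq_slice (x K v)).const_mul (τ K ^ 2)
          rw [integral_add int2 int3, integral_sub (integrable_const _) int1,
            integral_const, integral_const_mul, integral_const_mul,
            integral_inner hgint]
          simp [measure_univ]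
        rw [hexp]
        have hcombo : ‖(β K • x₀ + (1 - β K) • x K v) - xstar‖ ^ 2
            = β K * ‖x₀ - xstar‖ ^ 2 + (1 - β K) * ‖x K v - xstar‖ ^ 2
              - β K * (1 - β K) * ‖x K v - x₀‖ ^ 2 := by
          have he : (β K • x₀ + (1 - β K) • x K v) - xstar
              = β K • (x₀ - xstar) + (1 - β K) • (x K v - xstar) := by module
          rw [he, combo_norm_sq]
          have he2 : (x₀ - xstar) - (x K v - xstar) = x₀ - x K v := by abel
          rw [he2, norm_sub_rev x₀ (x K v)]
        have hw0 : ⟪(β K • x₀ + (1 - β K) • x K v) - xstar, ∫ a, g (x K v) a ∂μ⟫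
            = ⟪x K v - xstar, ∫ a, g (x K v) a ∂μ⟫
              + β K * ⟪x₀ - x K v, ∫ a, g (x K v) a ∂μ⟫ := by
          have he : (β K • x₀ + (1 - β K) • x K v) - xstar
              = (x K v - xstar) + β K • (x₀ - x K v) := by module
          rw [he, inner_add_left, real_inner_smul_left]
        have hI2 : -⟪x₀ - x K v, ∫ a, g (x K v) a ∂μ⟫
            ≤ ‖x K v - x₀‖ * (B * ‖x K v - x₀‖ + G) := by
          have h5 : -⟪x₀ - x K v, ∫ a, g (x K v) a ∂μ⟫
              = ⟪x K v - x₀, ∫ a, g (x K v) a ∂μ⟫ := by rw [← inner_neg_left, neg_sub]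
          have h6 := real_inner_le_norm (x K v - x₀) (∫ a, g (x K v) a ∂μ)
          have h7 : ‖x K v - x₀‖ * ‖∫ a, g (x K v) a ∂μ‖
              ≤ ‖x K v - x₀‖ * (B * ‖x K v - x₀‖ + G) :=
            mul_le_mul_of_nonneg_left hgbar_le (norm_nonneg _)
          linarith
        have hcase : 1 ≤ K ∨ ‖x K v - x₀‖ = 0 := by
          rcases Nat.eq_zero_or_pos K with h | h
          · right
            subst h
            rw [hx0 v, sub_self, norm_zero]
          · left; exact h
        have hbud := budget B G hB hG K (‖x K v - x₀‖) (norm_nonneg _) hcase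
        rw [← hβ K, ← hτ K] at hbud
        have ht2 : τ K ^ 2 * (∫ a, ‖g (x K v) a‖ ^ 2 ∂μ)
            ≤ τ K ^ 2 * (B ^ 2 * ‖x K v - x₀‖ ^ 2 + G ^ 2) :=
          mul_le_mul_of_nonneg_left (hBG (x K v)) (sq_nonneg _)
        have hterm : -(2 * τ K) * ⟪(β K • x₀ + (1 - β K) • x K v) - xstar, ∫ a, g (x K v) a ∂μ⟫
            ≤ 2 * τ K * β K * (‖x K v - x₀‖ * (B * ‖x K v - x₀‖ + G)) := by
          rw [hw0]
          have t2 : -(2 * τ K) * ⟪x K v - xstar, ∫ a, g (x K v) a ∂μ⟫ ≤ 0 := by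
            nlinarith [hip, hτ0]
          have t3 : -(2 * τ K) * (β K * ⟪x₀ - x K v, ∫ a, g (x K v) a ∂μ⟫)
              ≤ 2 * τ K * β K * (‖x K v - x₀‖ * (B * ‖x K v - x₀‖ + G)) := by
            have h8 := mul_le_mul_of_nonneg_left hI2
              (mul_nonneg (by linarith : (0:ℝ) ≤ 2 * τ K) hβ0.le)
            nlinarith [h8]
          nlinarith [t2, t3]
        nlinarith [hbud, ht2, hterm, hcombo]
      -- pointwise projection bound
      have hPle : ∀ p : Ω × (Fin K → Ω), P p ≤ Φ p := by
        intro p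
        simp only [hPdef, hΦdef]
        have h1 := hprojdist (β K • x₀ + (1 - β K) • x K p.2 - τ K • g (x K p.2) p.1)
        have h2 : ‖(β K • x₀ + (1 - β K) • x K p.2 - τ K • g (x K p.2) p.1) - xstar‖
            = ‖((β K • x₀ + (1 - β K) • x K p.2) - xstar) - τ K • g (x K p.2) p.1‖ := by
          congr 1
          abel
        have h3 := pow_le_pow_left₀ (norm_nonneg _) h1 2
        rw [h2] at h3
        exact h3
      have hPnn : ∀ p, 0 ≤ P p := fun p => by simp only [hPdef]; positivity
      have hPint : Integrable P (μ.prod (Measure.pi fun _ : Fin K => μ)) := by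
        apply Integrable.mono' hΦint hPmeas.aestronglyMeasurable
        filter_upwards with p
        rw [Real.norm_eq_abs, abs_of_nonneg (hPnn p)]
        exact hPle p
      -- transfer to the product space
      have hMP := measurePreserving_piFinSuccAbove (fun _ : Fin (K + 1) => μ) (Fin.last K)
      have happly : ∀ w : Fin (K + 1) → Ω,
          P (MeasurableEquiv.piFinSuccAbove (fun _ : Fin (K + 1) => Ω) (Fin.last K) w)
            = ‖x (K + 1) w - xstar‖ ^ 2 := by
        intro w
        have h1 : (MeasurableEquiv.piFinSuccAbove (fun _ : Fin (K + 1) => Ω) (Fin.last K)) w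
            = (w (Fin.last K), Fin.init w) := by
          simp [MeasurableEquiv.piFinSuccAbove, Fin.removeNth_last]
        rw [h1]
        simp only [hPdef]
        rw [hxrec K w]
      have e2 : ∫ w, P (MeasurableEquiv.piFinSuccAbove (fun _ : Fin (K + 1) => Ω) (Fin.last K) w)
            ∂(Measure.pi fun _ : Fin (K + 1) => μ)
          = ∫ p, P p ∂(μ.prod (Measure.pi fun _ : Fin K => μ)) :=
        hMP.integral_comp' P
      have keyeq : ∫ w, ‖x (K + 1) w - xstar‖ ^ 2 ∂(Measure.pi fun _ : Fin (K + 1) => μ)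
          = ∫ p, P p ∂(μ.prod (Measure.pi fun _ : Fin K => μ)) := by
        rw [← e2]
        exact integral_congr_ae (Filter.Eventually.of_forall fun w => (happly w).symm)
      have hintK1 : Integrable (fun w => ‖x (K + 1) w - xstar‖ ^ 2)
          (Measure.pi fun _ : Fin (K + 1) => μ) := by
        have hcomp : Integrable
            (fun w => P (MeasurableEquiv.piFinSuccAbove (fun _ : Fin (K + 1) => Ω) (Fin.last K) w))
            (Measure.pi fun _ : Fin (K + 1) => μ) :=
          (hMP.integrable_comp_emb (MeasurableEquiv.measurableEmbedding _)).mpr hPint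
        exact hcomp.congr (Filter.Eventually.of_forall fun w => happly w)
      -- chain of inequalities
      have step1 : ∫ p, P p ∂(μ.prod (Measure.pi fun _ : Fin K => μ))
          ≤ ∫ p, Φ p ∂(μ.prod (Measure.pi fun _ : Fin K => μ)) :=
        integral_mono_of_nonneg (Filter.Eventually.of_forall hPnn) hΦint
          (Filter.Eventually.of_forall hPle)
      have step2 : ∫ p, Φ p ∂(μ.prod (Measure.pi fun _ : Fin K => μ))
          = ∫ v, (∫ a, Φ (a, v) ∂μ) ∂(Measure.pi fun _ : Fin K => μ) :=
        integral_prod_symm Φ hΦint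
      have step3 : ∫ v, (∫ a, Φ (a, v) ∂μ) ∂(Measure.pi fun _ : Fin K => μ)
          ≤ ∫ v, ((1 - β K) * ‖x K v - xstar‖ ^ 2
              + (β K * ‖x₀ - xstar‖ ^ 2 + β K * (G ^ 2 / (3 * B ^ 2))))
            ∂(Measure.pi fun _ : Fin K => μ) := by
        apply integral_mono_of_nonneg
        · exact Filter.Eventually.of_forall fun v => integral_nonneg fun a => hΦnn _
        · exact (IHint.const_mul _).add (integrable_const _)
        · exact Filter.Eventually.of_forall fun v => by have := cond v; linarith
      have step4 : ∫ v, ((1 - β K) * ‖x K v - xstar‖ ^ 2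
              + (β K * ‖x₀ - xstar‖ ^ 2 + β K * (G ^ 2 / (3 * B ^ 2))))
            ∂(Measure.pi fun _ : Fin K => μ)
          = (1 - β K) * (∫ v, ‖x K v - xstar‖ ^ 2 ∂(Measure.pi fun _ : Fin K => μ))
            + (β K * ‖x₀ - xstar‖ ^ 2 + β K * (G ^ 2 / (3 * B ^ 2))) := by
        rw [integral_add (IHint.const_mul _) (integrable_const _), integral_const_mul,
          integral_const]
        simp [measure_univ]
      have hfinal : (1 - β K) * (∫ v, ‖x K v - xstar‖ ^ 2 ∂(Measure.pi fun _ : Fin K => μ))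
          ≤ (1 - β K) * (‖x₀ - xstar‖ ^ 2 + G ^ 2 / (3 * B ^ 2)) :=
        mul_le_mul_of_nonneg_left IHle (by linarith)
      refine ⟨hintK1, ?_⟩
      rw [keyeq]
      nlinarith [step1, step2, step3, step4, hfinal]
  intro K
  exact (main K).2
end

section
/- Under the stochastic subgradient oracle model with constants B, G > 0 and anchor x₀ ∈ X, assume f attains its minimum over X at x* ∈ X, and run the projected stochastic Halpern iteration with β_k = 1/(k+2) and τ_k = √(k+1)/(√6·B·(k+2)). Then for every K ≥ 1: (1/K)·Σ_{k=1}^{K} τ_k·E[f(x_k) − f(x*)] ≤ ((1 + Σ_{k=0}^{K} β_k)/K) · ((1/2)‖x₀ − x*‖² + G²/(6B²)). -/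
set_option maxHeartbeats 1000000
open MeasureTheory
open scoped RealInnerProductSpace

section proj
variable {E : Type*} [NormedAddCommGroup E] [InnerProductSpace ℝ E]
variable {X : Set E} (hXconv : Convex ℝ X) {proj : E → E}
  (hprojX : ∀ u, proj u ∈ X) (hproj : ∀ u, ∀ y ∈ X, ‖proj u - u‖ ≤ ‖y - u‖)

include hXconv hprojX hproj in
theorem aux_vi (u : E) {z : E} (hz : z ∈ X) : ⟪u - proj u, z - proj u⟫ ≤ 0 := by
  set p := proj u with hp
  have key : ∀ t : ℝ, 0 < t → t ≤ 1 → 2 * ⟪u - p, z - p⟫ ≤ t * ‖z - p‖ ^ 2 := by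
    intro t ht ht1
    have hc : (1 - t) • p + t • z ∈ X :=
      hXconv (hprojX u) hz (by linarith) ht.le (by ring)
    have h2 := hproj u _ hc
    have hcu : (1 - t) • p + t • z - u = (p - u) + t • (z - p) := by
      rw [sub_smul, one_smul, smul_sub]; abel
    have hsq : ‖p - u‖ ^ 2 ≤ ‖(1 - t) • p + t • z - u‖ ^ 2 :=
      pow_le_pow_left₀ (norm_nonneg _) h2 2
    rw [hcu, norm_add_sq_real, real_inner_smul_right, norm_smul, mul_pow,
      Real.norm_eq_abs, sq_abs] at hsq
    have hinner : ⟪p - u, z - p⟫ = -⟪u - p, z - p⟫ := by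
      rw [← inner_neg_left, neg_sub]
    rw [hinner] at hsq
    have ht2 : t ^ 2 * ‖z - p‖ ^ 2 ≤ t * (t * ‖z - p‖ ^ 2) := by ring_nf; exact le_refl _
    nlinarith [sq_nonneg (‖z - p‖), ht]
  by_contra h
  push_neg at h
  set A := 2 * ⟪u - p, z - p⟫ with hA
  have hA0 : 0 < A := by simp only [hA]; linarith
  set M := ‖z - p‖ ^ 2 with hM
  have hM0 : 0 ≤ M := sq_nonneg _
  rcases eq_or_lt_of_le hM0 with hMeq | hMpos
  · have := key 1 one_pos le_rfl
    rw [← hMeq] at this; linarith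
  · have hAM : 0 < A / (2 * M) := by positivity
    rcases le_or_gt (A / (2 * M)) 1 with hle | hgt
    · have := key _ hAM hle
      rw [div_mul_eq_mul_div, mul_comm] at this
      have : A ≤ A / 2 := by
        calc A ≤ M * A / (2 * M) := this
        _ = A / 2 := by field_simp
      linarith
    · have := key 1 one_pos le_rfl
      have hMA : M < A / 2 := by
        rw [lt_div_iff₀ (by positivity : (0:ℝ) < 2 * M)] at hgt
        linarith
      linarith

include hXconv hprojX hproj in
theorem aux_nonexp_point (u : E) {z : E} (hz : z ∈ X) : ‖proj u - z‖ ≤ ‖u - z‖ := by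
  have hvi := aux_vi hXconv hprojX hproj u hz
  set p := proj u
  have hid : ‖u - z‖ ^ 2 = ‖u - p‖ ^ 2 - 2 * ⟪u - p, z - p⟫ + ‖z - p‖ ^ 2 := by
    have : u - z = (u - p) - (z - p) := by abel
    rw [this, norm_sub_sq_real]
  have h1 : ‖p - z‖ ^ 2 ≤ ‖u - z‖ ^ 2 := by
    rw [show ‖p - z‖ = ‖z - p‖ from norm_sub_rev _ _]
    nlinarith [sq_nonneg (‖u - p‖)]
  nlinarith [norm_nonneg (p - z), norm_nonneg (u - z)]

include hXconv hprojX hproj in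
theorem aux_nonexp (u v : E) : ‖proj u - proj v‖ ≤ ‖u - v‖ := by
  have h1 := aux_vi hXconv hprojX hproj u (hprojX v)
  have h2 := aux_vi hXconv hprojX hproj v (hprojX u)
  set pu := proj u; set pv := proj v
  set c := pu - pv with hc
  have e1 : ⟪u - pu, pv - pu⟫ = -⟪u - pu, c⟫ := by rw [← inner_neg_right, hc, neg_sub]
  have e2 : ⟪v - pv, pu - pv⟫ = ⟪v - pv, c⟫ := rfl
  rw [e1] at h1
  have key : ‖c‖ ^ 2 ≤ ⟪u - v, c⟫ := by
    have : ⟪u - v, c⟫ = ⟪u - pu, c⟫ - ⟪v - pv, c⟫ + ⟪c, c⟫ := by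
      rw [hc]; simp only [inner_sub_left]; ring
    rw [this, real_inner_self_eq_norm_sq]
    linarith
  have hcs : ⟪u - v, c⟫ ≤ ‖u - v‖ * ‖c‖ := real_inner_le_norm _ _
  nlinarith [norm_nonneg c, norm_nonneg (u - v)]

include hXconv hprojX hproj in
theorem aux_proj_cont : Continuous proj :=
  (LipschitzWith.of_dist_le_mul (K := 1) fun a b => by
    simpa [dist_eq_norm] using aux_nonexp hXconv hprojX hproj a b).continuous
end proj

section jensen
variable {Ω : Type*} [MeasurableSpace Ω] {μ : Measure Ω} [IsProbabilityMeasure μ]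
variable {E : Type*} [NormedAddCommGroup E] [InnerProductSpace ℝ E] [CompleteSpace E]

theorem aux_int_norm_sq {F : Ω → E} (hF : MemLp F 2 μ) :
    Integrable (fun ω => ‖F ω‖ ^ 2) μ := by
  have h := hF.integrable_norm_rpow two_ne_zero ENNReal.ofNat_ne_top
  have heq : (fun ω => ‖F ω‖ ^ (2:ℕ)) = fun ω => ‖F ω‖ ^ ((2 : ENNReal).toReal) := by
    funext ω
    rw [ENNReal.toReal_ofNat, ← Real.rpow_natCast]
    norm_num
  rw [show (fun ω => ‖F ω‖ ^ 2) = (fun ω => ‖F ω‖ ^ (2:ℕ)) from rfl, heq]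
  exact h

theorem aux_jensen_sq {F : Ω → E} (hF : MemLp F 2 μ) :
    ‖∫ ω, F ω ∂μ‖ ^ 2 ≤ ∫ ω, ‖F ω‖ ^ 2 ∂μ := by
  have h1 : Integrable F μ := hF.integrable one_le_two
  have h2 : Integrable (fun ω => ‖F ω‖ ^ 2) μ := aux_int_norm_sq hF
  have h3 : Integrable (fun ω => ‖F ω‖) μ := h1.norm
  set m := ∫ ω, ‖F ω‖ ∂μ with hm
  have hv : 0 ≤ ∫ ω, (‖F ω‖ - m) ^ 2 ∂μ := integral_nonneg fun ω => sq_nonneg _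
  have hexp : (fun ω => (‖F ω‖ - m) ^ 2)
      = fun ω => (‖F ω‖ ^ 2 - (2 * m) * ‖F ω‖) + m ^ 2 := by
    funext ω; ring
  rw [hexp] at hv
  have hsub : Integrable (fun ω => ‖F ω‖ ^ 2 - (2 * m) * ‖F ω‖) μ :=
    h2.sub (h3.const_mul (2 * m))
  rw [integral_add hsub (integrable_const _),
    integral_sub h2 (h3.const_mul (2 * m)), integral_const_mul (2 * m), integral_const,
    probReal_univ] at hv
  simp only [ENNReal.toReal_one, one_smul, smul_eq_mul] at hv
  have hmsq : m ^ 2 ≤ ∫ ω, ‖F ω‖ ^ 2 ∂μ := by nlinarith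
  have hn : ‖∫ ω, F ω ∂μ‖ ≤ m := norm_integral_le_integral_norm F
  nlinarith [norm_nonneg (∫ ω, F ω ∂μ)]
end jensen
section step
variable {Ω : Type*} [MeasurableSpace Ω] (μ : Measure Ω) [IsProbabilityMeasure μ]
variable {E : Type*} [NormedAddCommGroup E] [InnerProductSpace ℝ E] [CompleteSpace E]

theorem step_bound
    {X : Set E} (hXconv : Convex ℝ X) {proj : E → E}
    (hprojX : ∀ u, proj u ∈ X) (hproj : ∀ u, ∀ y ∈ X, ‖proj u - u‖ ≤ ‖y - u‖)
    (x₀ xstar p : E) (hxstarX : xstar ∈ X)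
    (fp fstar : ℝ) {B G : ℝ} (hB : 0 < B) (hG : 0 < G)
    {gp : Ω → E} (hgpL2 : MemLp gp 2 μ)
    (hmean : fp + ⟪∫ ω, gp ω ∂μ, xstar - p⟫ ≤ fstar)
    (hSB : ∫ ω, ‖gp ω‖ ^ 2 ∂μ ≤ B ^ 2 * ‖p - x₀‖ ^ 2 + G ^ 2)
    {b t lam : ℝ} (hb0 : 0 ≤ b) (hb1 : b ≤ 1) (ht0 : 0 ≤ t) (hlam : 0 < lam)
    (hGcoef : (lam + 1) * t ^ 2 ≤ b / (3 * B ^ 2))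
    (hWcoef : (lam + 1) * t ^ 2 * B ^ 2 + b ^ 2 / lam ≤ b * (1 - b)) :
    (∫ ω, ‖proj (b • x₀ + (1 - b) • p - t • gp ω) - xstar‖ ^ 2 ∂μ) + 2 * t * (fp - fstar)
      ≤ ‖p - xstar‖ ^ 2 + b * (‖x₀ - xstar‖ ^ 2 + G ^ 2 / (3 * B ^ 2)) := by
  have hgInt : Integrable gp μ := hgpL2.integrable one_le_two
  have hg2Int : Integrable (fun ω => ‖gp ω‖ ^ 2) μ := aux_int_norm_sq hgpL2
  have hjensen : ‖∫ ω, gp ω ∂μ‖ ^ 2 ≤ ∫ ω, ‖gp ω‖ ^ 2 ∂μ := aux_jensen_sq hgpL2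
  have hii : ∀ c : E, ∫ ω, ⟪gp ω, c⟫ ∂μ = ⟪∫ ω, gp ω ∂μ, c⟫ := by
    intro c
    have hcomm : ∀ ω, ⟪gp ω, c⟫ = ⟪c, gp ω⟫ := fun ω => real_inner_comm _ _
    simp only [hcomm]
    rw [integral_inner hgInt, real_inner_comm]
  -- pointwise expansion of ‖q ω - xstar‖²
  have h2 : ∀ ω, ‖(b • x₀ + (1 - b) • p - t • gp ω) - xstar‖ ^ 2
      = ‖(b • x₀ + (1 - b) • p) - xstar‖ ^ 2 - 2 * t * ⟪gp ω, (b • x₀ + (1 - b) • p) - xstar⟫ + t ^ 2 * ‖gp ω‖ ^ 2 := by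
    intro ω
    have hq : (b • x₀ + (1 - b) • p - t • gp ω) - xstar
        = ((b • x₀ + (1 - b) • p) - xstar) - t • gp ω := by abel
    rw [hq, norm_sub_sq_real, real_inner_smul_right, norm_smul, mul_pow,
      Real.norm_eq_abs, sq_abs, real_inner_comm]
    ring
  have hsubInt : Integrable (fun ω => ‖(b • x₀ + (1 - b) • p) - xstar‖ ^ 2 - 2 * t * ⟪gp ω, (b • x₀ + (1 - b) • p) - xstar⟫) μ :=
    (integrable_const _).sub ((hgInt.inner_const _).const_mul _)
  have hrw : (fun ω => ‖(b • x₀ + (1 - b) • p - t • gp ω) - xstar‖ ^ 2)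
      = fun ω => (‖(b • x₀ + (1 - b) • p) - xstar‖ ^ 2 - 2 * t * ⟪gp ω, (b • x₀ + (1 - b) • p) - xstar⟫) + t ^ 2 * ‖gp ω‖ ^ 2 := by
    funext ω; exact h2 ω
  have hqInt : Integrable (fun ω => ‖(b • x₀ + (1 - b) • p - t • gp ω) - xstar‖ ^ 2) μ := by
    rw [hrw]; exact hsubInt.add (hg2Int.const_mul _)
  have h3 : ∫ ω, ‖(b • x₀ + (1 - b) • p - t • gp ω) - xstar‖ ^ 2 ∂μ
      = ‖(b • x₀ + (1 - b) • p) - xstar‖ ^ 2 - 2 * t * ⟪∫ ω, gp ω ∂μ, (b • x₀ + (1 - b) • p) - xstar⟫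
        + t ^ 2 * ∫ ω, ‖gp ω‖ ^ 2 ∂μ := by
    rw [hrw, integral_add hsubInt (hg2Int.const_mul _),
      integral_sub (integrable_const _) ((hgInt.inner_const _).const_mul _),
      integral_const_mul (2 * t), integral_const_mul (t ^ 2), integral_const, probReal_univ,
      hii]
    simp only [ENNReal.toReal_one, one_smul]
  -- step A: projection is nonexpansive toward xstar
  have hA : ∫ ω, ‖proj (b • x₀ + (1 - b) • p - t • gp ω) - xstar‖ ^ 2 ∂μ
      ≤ ∫ ω, ‖(b • x₀ + (1 - b) • p - t • gp ω) - xstar‖ ^ 2 ∂μ := by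
    exact integral_mono_of_nonneg (ae_of_all μ fun ω => sq_nonneg _) hqInt
      (ae_of_all μ fun ω => pow_le_pow_left₀ (norm_nonneg _)
        (aux_nonexp_point hXconv hprojX hproj _ hxstarX) 2)
  rw [h3] at hA
  obtain ⟨gbar, hgbardef⟩ : ∃ v, (∫ ω, gp ω ∂μ) = v := ⟨_, rfl⟩
  rw [hgbardef] at hmean h3 hA hjensen
  have h4 : ‖(b • x₀ + (1 - b) • p) - xstar‖ ^ 2 = (1 - b) * ‖p - xstar‖ ^ 2 + b * ‖x₀ - xstar‖ ^ 2 - b * (1 - b) * ‖p - x₀‖ ^ 2 := by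
    have e1 : (b • x₀ + (1 - b) • p) - xstar = (p - xstar) + b • (x₀ - p) := by
      module
    have e2 : x₀ - xstar = (x₀ - p) + (p - xstar) := by abel
    have h5loc : ‖x₀ - xstar‖ ^ 2 = ‖x₀ - p‖ ^ 2 + 2 * ⟪x₀ - p, p - xstar⟫ + ‖p - xstar‖ ^ 2 := by
      rw [e2, norm_add_sq_real]
    have hWrev : ‖x₀ - p‖ = ‖p - x₀‖ := norm_sub_rev _ _
    rw [e1, norm_add_sq_real, real_inner_smul_right, norm_smul, mul_pow,
      Real.norm_eq_abs, sq_abs, real_inner_comm]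
    rw [hWrev] at h5loc ⊢
    linear_combination (-b) * h5loc
  -- subgradient bound
  have h5 : -⟪gbar, (b • x₀ + (1 - b) • p) - xstar⟫ ≤ -(fp - fstar) + b * (‖gbar‖ * ‖p - x₀‖) := by
    have e1 : (b • x₀ + (1 - b) • p) - xstar = (p - xstar) + b • (x₀ - p) := by module
    have hsplit : ⟪gbar, (b • x₀ + (1 - b) • p) - xstar⟫ = ⟪gbar, p - xstar⟫ + b * ⟪gbar, x₀ - p⟫ := by
      rw [e1, inner_add_right, real_inner_smul_right]
    have hneg : ⟪gbar, xstar - p⟫ = -⟪gbar, p - xstar⟫ := by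
      rw [← inner_neg_right, neg_sub]
    have hsub : fp - fstar ≤ ⟪gbar, p - xstar⟫ := by
      rw [hneg] at hmean; linarith
    have hcs : -⟪gbar, x₀ - p⟫ ≤ ‖gbar‖ * ‖p - x₀‖ := by
      have h := abs_real_inner_le_norm gbar (x₀ - p)
      have hWr : ‖x₀ - p‖ = ‖p - x₀‖ := norm_sub_rev _ _
      rw [hWr] at h
      cases abs_le.mp h with
      | intro hl hr => linarith
    have hb' : b * (-⟪gbar, x₀ - p⟫) ≤ b * (‖gbar‖ * ‖p - x₀‖) :=
      mul_le_mul_of_nonneg_left hcs hb0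
    rw [hsplit]; linarith [hb', hsub]
  -- Young
  have h7 : 2 * t * (b * (‖gbar‖ * ‖p - x₀‖)) ≤ lam * t ^ 2 * ‖gbar‖ ^ 2 + b ^ 2 / lam * ‖p - x₀‖ ^ 2 := by
    rw [← sub_nonneg]
    have expand : lam * t ^ 2 * ‖gbar‖ ^ 2 + b ^ 2 / lam * ‖p - x₀‖ ^ 2 - 2 * t * (b * (‖gbar‖ * ‖p - x₀‖))
        = (lam * t * ‖gbar‖ - b * ‖p - x₀‖) ^ 2 / lam := by
      field_simp; ring
    rw [expand]; positivity
  have ht2 : (0:ℝ) ≤ 2 * t := by linarith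
  have h5mul : 2 * t * (-⟪gbar, (b • x₀ + (1 - b) • p) - xstar⟫) ≤ 2 * t * (-(fp - fstar) + b * (‖gbar‖ * ‖p - x₀‖)) :=
    mul_le_mul_of_nonneg_left h5 ht2
  have h6mul : lam * t ^ 2 * ‖gbar‖ ^ 2 ≤ lam * t ^ 2 * (∫ ω, ‖gp ω‖ ^ 2 ∂μ) :=
    mul_le_mul_of_nonneg_left hjensen (by positivity)
  have hSBmul : (lam + 1) * t ^ 2 * (∫ ω, ‖gp ω‖ ^ 2 ∂μ) ≤ (lam + 1) * t ^ 2 * (B ^ 2 * ‖p - x₀‖ ^ 2 + G ^ 2) :=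
    mul_le_mul_of_nonneg_left hSB (by positivity)
  have hWmul : ((lam + 1) * t ^ 2 * B ^ 2 + b ^ 2 / lam) * ‖p - x₀‖ ^ 2 ≤ b * (1 - b) * ‖p - x₀‖ ^ 2 :=
    mul_le_mul_of_nonneg_right hWcoef (sq_nonneg ‖p - x₀‖)
  have hGmul : (lam + 1) * t ^ 2 * G ^ 2 ≤ b * (G ^ 2 / (3 * B ^ 2)) := by
    calc (lam + 1) * t ^ 2 * G ^ 2 ≤ b / (3 * B ^ 2) * G ^ 2 :=
      mul_le_mul_of_nonneg_right hGcoef (sq_nonneg G)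
    _ = b * (G ^ 2 / (3 * B ^ 2)) := by ring
  have hbU : 0 ≤ b * ‖p - xstar‖ ^ 2 := mul_nonneg hb0 (sq_nonneg _)
  rw [h4] at hA
  linarith [hA, h5mul, h6mul, hSBmul, hWmul, hGmul, h7, hbU]
end step
section transfer
variable {Ω : Type*} [MeasurableSpace Ω] (μ : Measure Ω) [IsProbabilityMeasure μ]

theorem aux_esymm (k : ℕ) (q : Ω × (Fin k → Ω)) :
    (MeasurableEquiv.piFinSuccAbove (fun _ : Fin (k + 1) => Ω) (Fin.last k)).symm q
      = Fin.snoc q.2 q.1 := by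
  simp [MeasurableEquiv.piFinSuccAbove, Fin.insertNthEquiv]

theorem aux_transfer_int (k : ℕ) (F : (Fin (k + 1) → Ω) → ℝ) :
    Integrable (fun q : Ω × (Fin k → Ω) => F (Fin.snoc q.2 q.1))
        (μ.prod (Measure.pi fun _ : Fin k => μ))
      ↔ Integrable F (Measure.pi fun _ : Fin (k + 1) => μ) := by
  have hmp := (measurePreserving_piFinSuccAbove (fun _ : Fin (k + 1) => μ) (Fin.last k)).symm
  have h := hmp.integrable_comp_emb
    (MeasurableEquiv.measurableEmbedding
      (MeasurableEquiv.piFinSuccAbove (fun _ : Fin (k + 1) => Ω) (Fin.last k)).symm) (g := F)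
  rwa [show (F ∘ (MeasurableEquiv.piFinSuccAbove (fun _ : Fin (k + 1) => Ω) (Fin.last k)).symm)
      = fun q : Ω × (Fin k → Ω) => F (Fin.snoc q.2 q.1) from
    funext fun q => by rw [Function.comp_apply, aux_esymm]] at h

theorem aux_transfer_eq (k : ℕ) (F : (Fin (k + 1) → Ω) → ℝ)
    (hF : Integrable F (Measure.pi fun _ : Fin (k + 1) => μ)) :
    ∫ w, F w ∂(Measure.pi fun _ : Fin (k + 1) => μ)
      = ∫ v, ∫ a, F (Fin.snoc v a) ∂μ ∂(Measure.pi fun _ : Fin k => μ) := by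
  have hmp := (measurePreserving_piFinSuccAbove (fun _ : Fin (k + 1) => μ) (Fin.last k)).symm
  have h := hmp.integral_comp
    (MeasurableEquiv.measurableEmbedding
      (MeasurableEquiv.piFinSuccAbove (fun _ : Fin (k + 1) => Ω) (Fin.last k)).symm) F
  rw [← h]
  have h1 : (fun q : Ω × (Fin k → Ω) =>
      F ((MeasurableEquiv.piFinSuccAbove (fun _ : Fin (k + 1) => Ω) (Fin.last k)).symm q))
      = fun q : Ω × (Fin k → Ω) => F (Fin.snoc q.2 q.1) :=
    funext fun q => by rw [aux_esymm]
  rw [show (∫ q, F ((MeasurableEquiv.piFinSuccAbove (fun _ : Fin (k + 1) => Ω)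
      (Fin.last k)).symm q) ∂(μ.prod (Measure.pi fun _ : Fin k => μ)))
    = ∫ q : Ω × (Fin k → Ω), F (Fin.snoc q.2 q.1) ∂(μ.prod (Measure.pi fun _ : Fin k => μ))
    from by rw [h1]]
  exact integral_prod_symm _ ((aux_transfer_int μ k F).mpr hF)
end transfer
/-- Weighted-sum suboptimality bound for the projected stochastic Halpern iteration under (BG-0). -/
theorem halpern_sgd_weighted_sum_bound
    {d : ℕ} {Ω : Type*} [MeasurableSpace Ω] (μ : Measure Ω) [IsProbabilityMeasure μ]
    (X : Set (EuclideanSpace ℝ (Fin d))) (hXne : X.Nonempty) (hXcl : IsClosed X)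
    (hXconv : Convex ℝ X)
    (f : EuclideanSpace ℝ (Fin d) → ℝ) (hfconv : ConvexOn ℝ Set.univ f)
    (proj : EuclideanSpace ℝ (Fin d) → EuclideanSpace ℝ (Fin d))
    (hprojX : ∀ u, proj u ∈ X)
    (hproj : ∀ u, ∀ y ∈ X, ‖proj u - u‖ ≤ ‖y - u‖)
    (x₀ : EuclideanSpace ℝ (Fin d)) (hx₀ : x₀ ∈ X)
    (B G : ℝ) (hB : 0 < B) (hG : 0 < G)
    (g : EuclideanSpace ℝ (Fin d) → Ω → EuclideanSpace ℝ (Fin d))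
    (hgmeas : Measurable (Function.uncurry g))
    (hgL2 : ∀ x, MemLp (g x) 2 μ)
    (hunbiased : ∀ x y, f x + ⟪∫ ω, g x ω ∂μ, y - x⟫ ≤ f y)
    (hBG : ∀ x, ∫ ω, ‖g x ω‖ ^ 2 ∂μ ≤ B ^ 2 * ‖x - x₀‖ ^ 2 + G ^ 2)
    (xstar : EuclideanSpace ℝ (Fin d)) (hxstarX : xstar ∈ X)
    (hxstarmin : ∀ y ∈ X, f xstar ≤ f y)
    (β τ : ℕ → ℝ)
    (hβ : ∀ k, β k = 1 / ((k : ℝ) + 2))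
    (hτ : ∀ k, τ k = Real.sqrt ((k : ℝ) + 1) / (Real.sqrt 6 * B * ((k : ℝ) + 2)))
    (x : (k : ℕ) → (Fin k → Ω) → EuclideanSpace ℝ (Fin d))
    (hxmeas : ∀ k, Measurable (x k))
    (hx0 : ∀ w, x 0 w = x₀)
    (hxrec : ∀ k (w : Fin (k + 1) → Ω),
      x (k + 1) w = proj (β k • x₀ + (1 - β k) • x k (Fin.init w)
        - τ k • g (x k (Fin.init w)) (w (Fin.last k)))) :
    ∀ K : ℕ, 1 ≤ K →
      (1 / (K : ℝ)) * ∑ k ∈ Finset.Icc 1 K,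
          τ k * ∫ w, (f (x k w) - f xstar) ∂(Measure.pi fun _ : Fin k => μ)
        ≤ ((1 + ∑ k ∈ Finset.range (K + 1), β k) / (K : ℝ)) *
            ((1 / 2) * ‖x₀ - xstar‖ ^ 2 + G ^ 2 / (6 * B ^ 2)) := by
  -- basic facts
  have hfcont : Continuous f := by
    exact continuousOn_univ.mp (hfconv.continuousOn isOpen_univ)
  have hmemX : ∀ k (w : Fin k → Ω), x k w ∈ X := by
    intro k
    cases k with
    | zero => intro w; rw [hx0]; exact hx₀
    | succ n => intro w; rw [hxrec]; exact hprojX _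
  have hb0 : ∀ k, 0 ≤ β k := fun k => by rw [hβ]; positivity
  have hb1 : ∀ k, β k ≤ 1 := fun k => by
    rw [hβ]; rw [div_le_one (by positivity)]; have : (0:ℝ) ≤ (k:ℝ) := Nat.cast_nonneg k; linarith
  have ht0 : ∀ k, 0 ≤ τ k := fun k => by rw [hτ]; positivity
  have ht2 : ∀ k, (τ k) ^ 2 = ((k : ℝ) + 1) / (6 * B ^ 2 * ((k : ℝ) + 2) ^ 2) := by
    intro k
    rw [hτ, div_pow, mul_pow, mul_pow, Real.sq_sqrt (by positivity), Real.sq_sqrt (by positivity)]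
  have hlam : ∀ k : ℕ, 0 < ((k : ℝ) + 3) / ((k : ℝ) + 1) := fun k => by positivity
  have hGcoef : ∀ k : ℕ, (((k : ℝ) + 3) / ((k : ℝ) + 1) + 1) * (τ k) ^ 2 ≤ β k / (3 * B ^ 2) := by
    intro k
    rw [ht2, hβ]
    apply le_of_eq
    have h1 : ((k:ℝ) + 1) ≠ 0 := by positivity
    have h2 : ((k:ℝ) + 2) ≠ 0 := by positivity
    have h3 : B ≠ 0 := ne_of_gt hB
    field_simp
    ring
  have hWcoef : ∀ k : ℕ, (((k : ℝ) + 3) / ((k : ℝ) + 1) + 1) * (τ k) ^ 2 * B ^ 2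
      + (β k) ^ 2 / (((k : ℝ) + 3) / ((k : ℝ) + 1)) ≤ β k * (1 - β k) := by
    intro k
    rw [ht2, hβ]
    have hK : (0:ℝ) ≤ (k:ℝ) := Nat.cast_nonneg k
    rw [← sub_nonneg]
    have heq : 1 / ((k:ℝ) + 2) * (1 - 1 / ((k:ℝ) + 2))
        - ((((k:ℝ) + 3) / ((k:ℝ) + 1) + 1) * (((k:ℝ) + 1) / (6 * B ^ 2 * ((k:ℝ) + 2) ^ 2)) * B ^ 2
          + (1 / ((k:ℝ) + 2)) ^ 2 / (((k:ℝ) + 3) / ((k:ℝ) + 1)))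
        = 2 * (k:ℝ) / (3 * ((k:ℝ) + 2) * ((k:ℝ) + 3)) := by
      have h1 : ((k:ℝ) + 1) ≠ 0 := by positivity
      have h2 : ((k:ℝ) + 2) ≠ 0 := by positivity
      have h3 : ((k:ℝ) + 3) ≠ 0 := by positivity
      have h4 : B ≠ 0 := ne_of_gt hB
      field_simp
      ring
    rw [heq]
    positivity
  -- integrability of ‖x k - x₀‖²
  have hIntx : ∀ k, Integrable (fun w => ‖x k w - x₀‖ ^ 2) (Measure.pi fun _ : Fin k => μ) := by
    intro k
    induction k with
    | zero =>
      have h : (fun w : Fin 0 → Ω => ‖x 0 w - x₀‖ ^ 2) = fun _ => 0 := by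
        funext w; rw [hx0]; simp
      rw [h]; exact integrable_const 0
    | succ k ih =>
      have hptw : ∀ w : Fin (k + 1) → Ω, ‖x (k + 1) w - x₀‖ ^ 2
          ≤ 8 * ‖x k (Fin.init w) - x₀‖ ^ 2
            + 8 * (τ k) ^ 2 * ‖g (x k (Fin.init w)) (w (Fin.last k))‖ ^ 2 := by
        intro w
        rw [hxrec]
        have hY : (β k • x₀ + (1 - β k) • x k (Fin.init w)
              - τ k • g (x k (Fin.init w)) (w (Fin.last k))) - x₀
            = (1 - β k) • (x k (Fin.init w) - x₀)
              - τ k • g (x k (Fin.init w)) (w (Fin.last k)) := by module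
        set Y := β k • x₀ + (1 - β k) • x k (Fin.init w)
              - τ k • g (x k (Fin.init w)) (w (Fin.last k)) with hYdef
        have h1 : ‖proj Y - x₀‖ ≤ ‖proj Y - Y‖ + ‖Y - x₀‖ := by
          have := dist_triangle (proj Y) Y x₀
          simpa [dist_eq_norm] using this
        have h2 : ‖proj Y - Y‖ ≤ ‖Y - x₀‖ := by
          have := hproj Y x₀ hx₀
          rwa [norm_sub_rev x₀ Y] at this
        have h3 : ‖Y - x₀‖ ≤ ‖x k (Fin.init w) - x₀‖
            + τ k * ‖g (x k (Fin.init w)) (w (Fin.last k))‖ := by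
          rw [hYdef, hY]
          refine (norm_sub_le _ _).trans ?_
          rw [norm_smul, norm_smul, Real.norm_eq_abs, Real.norm_eq_abs,
            abs_of_nonneg (ht0 k), abs_of_nonneg (by linarith [hb1 k] : (0:ℝ) ≤ 1 - β k)]
          have := norm_nonneg (x k (Fin.init w) - x₀)
          nlinarith [hb0 k]
        have h4 : ‖proj Y - x₀‖ ≤ 2 * (‖x k (Fin.init w) - x₀‖
            + τ k * ‖g (x k (Fin.init w)) (w (Fin.last k))‖) := by linarith
        have h5 := pow_le_pow_left₀ (norm_nonneg _) h4 2
        nlinarith [sq_nonneg (‖x k (Fin.init w) - x₀‖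
            - τ k * ‖g (x k (Fin.init w)) (w (Fin.last k))‖),
          norm_nonneg (g (x k (Fin.init w)) (w (Fin.last k))), ht0 k,
          mul_nonneg (ht0 k) (norm_nonneg (g (x k (Fin.init w)) (w (Fin.last k))))]
      -- integrable majorant
      have hmajInt : Integrable (fun w : Fin (k + 1) → Ω =>
          8 * ‖x k (Fin.init w) - x₀‖ ^ 2
            + 8 * (τ k) ^ 2 * ‖g (x k (Fin.init w)) (w (Fin.last k))‖ ^ 2)
          (Measure.pi fun _ : Fin (k + 1) => μ) := by
        rw [← aux_transfer_int μ k]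
        simp only [Fin.init_snoc, Fin.snoc_last]
        have hsnd : MeasurePreserving (Prod.snd)
            (μ.prod (Measure.pi fun _ : Fin k => μ)) (Measure.pi fun _ : Fin k => μ) := by
          refine ⟨measurable_snd, ?_⟩
          simp [Measure.map_snd_prod]
        apply Integrable.add
        · have h1 : Integrable (fun v : Fin k → Ω => 8 * ‖x k v - x₀‖ ^ 2)
              (Measure.pi fun _ : Fin k => μ) := ih.const_mul 8
          exact (hsnd.integrable_comp h1.aestronglyMeasurable).mpr h1
        · -- g-term
          have hmeas2 : Measurable (fun q : Ω × (Fin k → Ω) => ‖g (x k q.2) q.1‖ ^ 2) := by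
            have hm : Measurable (fun q : Ω × (Fin k → Ω) => g (x k q.2) q.1) :=
              hgmeas.comp (((hxmeas k).comp measurable_snd).prodMk measurable_fst)
            exact hm.norm.pow_const 2
          have hmeas3 : Measurable (fun q : Ω × (Fin k → Ω) =>
              8 * (τ k) ^ 2 * ‖g (x k q.2) q.1‖ ^ 2) := hmeas2.const_mul _
          rw [integrable_prod_iff' hmeas3.aestronglyMeasurable]
          constructor
          · refine ae_of_all _ fun v => ?_
            exact ((aux_int_norm_sq (hgL2 (x k v))).const_mul _)
          · -- integral condition
            have hnorm : ∀ v : Fin k → Ω,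
                (∫ a, ‖8 * (τ k) ^ 2 * ‖g (x k v) a‖ ^ 2‖ ∂μ)
                  = 8 * (τ k) ^ 2 * ∫ a, ‖g (x k v) a‖ ^ 2 ∂μ := by
              intro v
              rw [← integral_const_mul]
              congr 1
              funext a
              rw [Real.norm_eq_abs, abs_of_nonneg (by positivity)]
            have hbound : ∀ v : Fin k → Ω,
                8 * (τ k) ^ 2 * ∫ a, ‖g (x k v) a‖ ^ 2 ∂μ
                  ≤ 8 * (τ k) ^ 2 * (B ^ 2 * ‖x k v - x₀‖ ^ 2 + G ^ 2) :=
              fun v => mul_le_mul_of_nonneg_left (hBG _) (by positivity)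
            have hmajv : Integrable (fun v : Fin k → Ω =>
                8 * (τ k) ^ 2 * (B ^ 2 * ‖x k v - x₀‖ ^ 2 + G ^ 2))
                (Measure.pi fun _ : Fin k => μ) :=
              (((ih.const_mul (B ^ 2)).add (integrable_const (G ^ 2))).const_mul (8 * (τ k) ^ 2))
            have hsm : StronglyMeasurable (fun q : Ω × (Fin k → Ω) =>
                ‖8 * (τ k) ^ 2 * ‖g (x k q.2) q.1‖ ^ 2‖) :=
              hmeas3.norm.stronglyMeasurable
            have haesm : AEStronglyMeasurable (fun v : Fin k → Ω =>
                ∫ a, ‖8 * (τ k) ^ 2 * ‖g (x k v) a‖ ^ 2‖ ∂μ)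
                (Measure.pi fun _ : Fin k => μ) := by
              exact (MeasureTheory.StronglyMeasurable.integral_prod_left' (μ := μ)
                hsm).aestronglyMeasurable
            refine Integrable.mono' hmajv haesm (ae_of_all _ fun v => ?_)
            rw [Real.norm_eq_abs, abs_of_nonneg]
            · rw [hnorm v]; exact hbound v
            · rw [hnorm v]
              have : 0 ≤ ∫ a, ‖g (x k v) a‖ ^ 2 ∂μ := integral_nonneg fun a => sq_nonneg _
              positivity
      -- conclude
      have haesmT : AEStronglyMeasurable (fun w : Fin (k + 1) → Ω => ‖x (k + 1) w - x₀‖ ^ 2)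
          (Measure.pi fun _ : Fin (k + 1) => μ) :=
        (((hxmeas (k + 1)).sub measurable_const).norm.pow_const 2).aestronglyMeasurable
      refine Integrable.mono' hmajInt haesmT (ae_of_all _ fun w => ?_)
      rw [Real.norm_eq_abs, abs_of_nonneg (sq_nonneg _)]
      exact hptw w
  -- integrability of ‖x k - xstar‖²
  have hIntU : ∀ k, Integrable (fun w => ‖x k w - xstar‖ ^ 2)
      (Measure.pi fun _ : Fin k => μ) := by
    intro k
    have hmaj : Integrable (fun w => 2 * ‖x k w - x₀‖ ^ 2 + 2 * ‖x₀ - xstar‖ ^ 2)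
        (Measure.pi fun _ : Fin k => μ) :=
      ((hIntx k).const_mul 2).add (integrable_const _)
    refine Integrable.mono' hmaj
      ((((hxmeas k).sub measurable_const).norm.pow_const 2).aestronglyMeasurable)
      (ae_of_all _ fun w => ?_)
    rw [Real.norm_eq_abs, abs_of_nonneg (sq_nonneg _)]
    have htri : ‖x k w - xstar‖ ≤ ‖x k w - x₀‖ + ‖x₀ - xstar‖ := by
      have := dist_triangle (x k w) x₀ xstar
      simpa [dist_eq_norm] using this
    nlinarith [pow_le_pow_left₀ (norm_nonneg _) htri 2,
      sq_nonneg (‖x k w - x₀‖ - ‖x₀ - xstar‖)]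
  -- norm bound on the mean oracle
  have hgbarnorm : ∀ p, ‖∫ ω, g p ω ∂μ‖ ≤ B * ‖p - x₀‖ + G := by
    intro p
    have h1 : ‖∫ ω, g p ω ∂μ‖ ^ 2 ≤ B ^ 2 * ‖p - x₀‖ ^ 2 + G ^ 2 :=
      (aux_jensen_sq (hgL2 p)).trans (hBG p)
    nlinarith [norm_nonneg (∫ ω, g p ω ∂μ), norm_nonneg (p - x₀),
      mul_nonneg (le_of_lt hB) (norm_nonneg (p - x₀)),
      mul_nonneg (mul_nonneg (le_of_lt hB) (norm_nonneg (p - x₀))) (le_of_lt hG)]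
  -- growth bound for f
  have hfx : ∀ p, f p - f xstar
      ≤ (B * ‖p - x₀‖ + G) * (‖p - x₀‖ + ‖x₀ - xstar‖) := by
    intro p
    have h1 := hunbiased p xstar
    have h2 : f p - f xstar ≤ -⟪∫ ω, g p ω ∂μ, xstar - p⟫ := by linarith
    have h3 : -⟪∫ ω, g p ω ∂μ, xstar - p⟫ ≤ ‖∫ ω, g p ω ∂μ‖ * ‖xstar - p‖ := by
      have h := abs_real_inner_le_norm (∫ ω, g p ω ∂μ) (xstar - p)
      cases abs_le.mp h with
      | intro hl hr => linarith
    have h4 : ‖xstar - p‖ ≤ ‖p - x₀‖ + ‖x₀ - xstar‖ := by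
      rw [norm_sub_rev]
      have := dist_triangle p x₀ xstar
      simpa [dist_eq_norm] using this
    have h5 : ‖∫ ω, g p ω ∂μ‖ * ‖xstar - p‖
        ≤ (B * ‖p - x₀‖ + G) * (‖p - x₀‖ + ‖x₀ - xstar‖) := by
      apply mul_le_mul (hgbarnorm p) h4 (norm_nonneg _)
      positivity
    linarith
  -- integrability of f ∘ x k - f xstar
  have hIntf : ∀ k, Integrable (fun w => f (x k w) - f xstar)
      (Measure.pi fun _ : Fin k => μ) := by
    intro k
    have hmaj : Integrable (fun w =>
        B * ‖x k w - x₀‖ ^ 2 + (B * ‖x₀ - xstar‖ + G) * (1 + ‖x k w - x₀‖ ^ 2)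
          + G * ‖x₀ - xstar‖) (Measure.pi fun _ : Fin k => μ) := by
      refine Integrable.add (Integrable.add ((hIntx k).const_mul B) ?_) (integrable_const _)
      exact ((integrable_const 1).add (hIntx k)).const_mul _
    refine Integrable.mono' hmaj
      (((hfcont.measurable.comp (hxmeas k)).sub_const _).aestronglyMeasurable)
      (ae_of_all _ fun w => ?_)
    have hnn : 0 ≤ f (x k w) - f xstar := sub_nonneg.mpr (hxstarmin _ (hmemX k w))
    rw [Real.norm_eq_abs, abs_of_nonneg hnn]
    have h1 := hfx (x k w)
    have hW1 : ‖x k w - x₀‖ ≤ 1 + ‖x k w - x₀‖ ^ 2 := by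
      nlinarith [sq_nonneg (‖x k w - x₀‖ - 1)]
    have hD0 : (0:ℝ) ≤ ‖x₀ - xstar‖ := norm_nonneg _
    have hW0 : (0:ℝ) ≤ ‖x k w - x₀‖ := norm_nonneg _
    nlinarith [mul_nonneg (mul_nonneg hB.le hD0) hW0, mul_nonneg hG.le hW0,
      mul_nonneg (mul_nonneg hB.le hD0) (sq_nonneg ‖x k w - x₀‖),
      mul_nonneg hG.le (sq_nonneg ‖x k w - x₀‖)]
  have hδ0 : ∀ k, 0 ≤ ∫ w, (f (x k w) - f xstar) ∂(Measure.pi fun _ : Fin k => μ) :=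
    fun k => integral_nonneg fun w => sub_nonneg.mpr (hxstarmin _ (hmemX k w))
  -- the one-step inequality in expectation
  have hstep : ∀ k : ℕ,
      2 * τ k * (∫ w, (f (x k w) - f xstar) ∂(Measure.pi fun _ : Fin k => μ))
        + (∫ w, ‖x (k + 1) w - xstar‖ ^ 2 ∂(Measure.pi fun _ : Fin (k + 1) => μ))
      ≤ (∫ w, ‖x k w - xstar‖ ^ 2 ∂(Measure.pi fun _ : Fin k => μ))
        + β k * (‖x₀ - xstar‖ ^ 2 + G ^ 2 / (3 * B ^ 2)) := by
    intro k
    have hsnoc : ∀ (v : Fin k → Ω) (a : Ω), x (k + 1) (Fin.snoc v a)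
        = proj (β k • x₀ + (1 - β k) • x k v - τ k • g (x k v) a) := by
      intro v a
      rw [hxrec]
      simp [Fin.init_snoc, Fin.snoc_last]
    -- rewrite the (k+1)-integral via Fubini
    have hφrw : ∫ w, ‖x (k + 1) w - xstar‖ ^ 2 ∂(Measure.pi fun _ : Fin (k + 1) => μ)
        = ∫ v, (∫ a, ‖proj (β k • x₀ + (1 - β k) • x k v - τ k • g (x k v) a) - xstar‖ ^ 2 ∂μ)
            ∂(Measure.pi fun _ : Fin k => μ) := by
      rw [aux_transfer_eq μ k _ (hIntU (k + 1))]
      refine integral_congr_ae (ae_of_all _ fun v => ?_)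
      refine integral_congr_ae (ae_of_all _ fun a => ?_)
      simp only [hsnoc]
    have hvbound : ∀ v : Fin k → Ω,
        (∫ a, ‖proj (β k • x₀ + (1 - β k) • x k v - τ k • g (x k v) a) - xstar‖ ^ 2 ∂μ)
          + 2 * τ k * (f (x k v) - f xstar)
        ≤ ‖x k v - xstar‖ ^ 2 + β k * (‖x₀ - xstar‖ ^ 2 + G ^ 2 / (3 * B ^ 2)) :=
      fun v => step_bound μ hXconv hprojX hproj x₀ xstar (x k v) hxstarX
        (f (x k v)) (f xstar) hB hG (hgL2 _) (hunbiased _ _) (hBG _)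
        (hb0 k) (hb1 k) (ht0 k) (hlam k) (hGcoef k) (hWcoef k)
    have hInner : Integrable (fun v : Fin k → Ω =>
        ∫ a, ‖proj (β k • x₀ + (1 - β k) • x k v - τ k • g (x k v) a) - xstar‖ ^ 2 ∂μ)
        (Measure.pi fun _ : Fin k => μ) := by
      have h1 : Integrable (fun q : Ω × (Fin k → Ω) =>
          ‖x (k + 1) (Fin.snoc q.2 q.1) - xstar‖ ^ 2)
          (μ.prod (Measure.pi fun _ : Fin k => μ)) :=
        (aux_transfer_int μ k _).mpr (hIntU (k + 1))
      have h2 := h1.integral_prod_right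
      refine h2.congr (ae_of_all _ fun v => ?_)
      refine integral_congr_ae (ae_of_all _ fun a => ?_)
      simp only [hsnoc]
    have hLHSint : Integrable (fun v : Fin k → Ω =>
        (∫ a, ‖proj (β k • x₀ + (1 - β k) • x k v - τ k • g (x k v) a) - xstar‖ ^ 2 ∂μ)
          + 2 * τ k * (f (x k v) - f xstar)) (Measure.pi fun _ : Fin k => μ) :=
      hInner.add ((hIntf k).const_mul _)
    have hRHSint : Integrable (fun v : Fin k → Ω =>
        ‖x k v - xstar‖ ^ 2 + β k * (‖x₀ - xstar‖ ^ 2 + G ^ 2 / (3 * B ^ 2)))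
        (Measure.pi fun _ : Fin k => μ) := (hIntU k).add (integrable_const _)
    have hmono := integral_mono hLHSint hRHSint hvbound
    rw [integral_add hInner ((hIntf k).const_mul _), integral_const_mul,
      integral_add (hIntU k) (integrable_const _), integral_const, probReal_univ] at hmono
    simp only [ENNReal.toReal_one, one_smul] at hmono
    rw [hφrw]
    linarith
  -- telescoping
  have htel : ∀ N : ℕ,
      (∑ k ∈ Finset.range N, 2 * τ k
          * ∫ w, (f (x k w) - f xstar) ∂(Measure.pi fun _ : Fin k => μ))
        + (∫ w, ‖x N w - xstar‖ ^ 2 ∂(Measure.pi fun _ : Fin N => μ))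
      ≤ ‖x₀ - xstar‖ ^ 2
        + (∑ k ∈ Finset.range N, β k) * (‖x₀ - xstar‖ ^ 2 + G ^ 2 / (3 * B ^ 2)) := by
    intro N
    induction N with
    | zero =>
      simp only [Finset.range_zero, Finset.sum_empty, zero_add, zero_mul, add_zero]
      have h : (fun w : Fin 0 → Ω => ‖x 0 w - xstar‖ ^ 2)
          = fun _ => ‖x₀ - xstar‖ ^ 2 := by
        funext w; rw [hx0]
      rw [h, integral_const, probReal_univ]
      simp
    | succ N ihN =>
      rw [Finset.sum_range_succ, Finset.sum_range_succ]
      have hs := hstep N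
      have hnn : 0 ≤ β N * (‖x₀ - xstar‖ ^ 2 + G ^ 2 / (3 * B ^ 2)) := by
        have := hb0 N; positivity
      nlinarith [hs, ihN]
  -- final assembly
  intro K hK
  have hKpos : (0:ℝ) < (K:ℝ) := by exact_mod_cast Nat.lt_of_lt_of_le Nat.zero_lt_one hK
  have h1 := htel (K + 1)
  have hφpos : 0 ≤ ∫ w, ‖x (K + 1) w - xstar‖ ^ 2 ∂(Measure.pi fun _ : Fin (K + 1) => μ) :=
    integral_nonneg fun w => sq_nonneg _
  have hsum : ∑ k ∈ Finset.range (K + 1), 2 * τ k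
      * ∫ w, (f (x k w) - f xstar) ∂(Measure.pi fun _ : Fin k => μ)
      ≤ ‖x₀ - xstar‖ ^ 2
        + (∑ k ∈ Finset.range (K + 1), β k) * (‖x₀ - xstar‖ ^ 2 + G ^ 2 / (3 * B ^ 2)) := by
    linarith
  have hsubset : ∑ k ∈ Finset.Icc 1 K, 2 * τ k
      * ∫ w, (f (x k w) - f xstar) ∂(Measure.pi fun _ : Fin k => μ)
      ≤ ∑ k ∈ Finset.range (K + 1), 2 * τ k
        * ∫ w, (f (x k w) - f xstar) ∂(Measure.pi fun _ : Fin k => μ) := by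
    apply Finset.sum_le_sum_of_subset_of_nonneg
    · intro i hi
      rw [Finset.mem_Icc] at hi
      rw [Finset.mem_range]
      omega
    · intro i _ _
      have := mul_nonneg (ht0 i) (hδ0 i)
      linarith
  set C : ℝ := (1 / 2) * ‖x₀ - xstar‖ ^ 2 + G ^ 2 / (6 * B ^ 2) with hCdef
  have hC2 : ‖x₀ - xstar‖ ^ 2 + G ^ 2 / (3 * B ^ 2) = 2 * C := by
    rw [hCdef]; field_simp; ring
  have hD2C : ‖x₀ - xstar‖ ^ 2 ≤ 2 * C := by
    rw [← hC2]
    have : 0 ≤ G ^ 2 / (3 * B ^ 2) := by positivity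
    linarith
  have hfinal : ∑ k ∈ Finset.Icc 1 K, τ k
      * ∫ w, (f (x k w) - f xstar) ∂(Measure.pi fun _ : Fin k => μ)
      ≤ (1 + ∑ k ∈ Finset.range (K + 1), β k) * C := by
    have hhalf : ∑ k ∈ Finset.Icc 1 K, 2 * τ k
        * ∫ w, (f (x k w) - f xstar) ∂(Measure.pi fun _ : Fin k => μ)
        = 2 * ∑ k ∈ Finset.Icc 1 K, τ k
          * ∫ w, (f (x k w) - f xstar) ∂(Measure.pi fun _ : Fin k => μ) := by
      rw [Finset.mul_sum]
      apply Finset.sum_congr rfl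
      intro i _
      ring
    rw [hC2] at hsum
    nlinarith [hsum, hsubset, hhalf, hD2C]
  calc (1 / (K : ℝ)) * ∑ k ∈ Finset.Icc 1 K,
        τ k * ∫ w, (f (x k w) - f xstar) ∂(Measure.pi fun _ : Fin k => μ)
      ≤ (1 / (K : ℝ)) * ((1 + ∑ k ∈ Finset.range (K + 1), β k) * C) :=
        mul_le_mul_of_nonneg_left hfinal (by positivity)
    _ = ((1 + ∑ k ∈ Finset.range (K + 1), β k) / (K : ℝ)) * C := by ring
end

section
/- Under the stochastic oracle model for the Lagrangian with constants B, G > 0 and anchor z₀ = (x₀, y₀) ∈ Z, let the stochastic gradient descent–ascent iteration with Halpern anchoring be run with β_k = 1/(k+2) and arbitrary step sizes τ_k > 0. Then for every realization of the samples, every z ∈ Z, and every K > 0: Σ_{k=0}^{K−1} 2τ_k·⟨F(z_k), z_k − z⟩ − (3 + log(K+1))·‖z − z₀‖² ≤ Σ_{k=0}^{K−1} [ (2τ_k²/(1−β_k))·‖F̃(z_k, ω_k)‖² + 2τ_k·⟨F(z_k) − F̃(z_k, ω_k), z_k⟩ ] + ‖Σ_{k=0}^{K−1} τ_k·(F(z_k)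 − F̃(z_k, ω_k))‖² + 2‖z₀‖² − Σ_{k=0}^{K−1} [ ((1−β_k)/2)·‖z_{k+1} − z_k‖² + β_k·‖z₀ − z_{k+1}‖² ]. -/
open MeasureTheory
open scoped RealInnerProductSpace

noncomputable section

/-- The primal-dual space `ℝ^d × ℝ^n` with the Euclidean (ℓ²) product structure. -/
abbrev PD (d n : ℕ) : Type :=
  WithLp 2 ((EuclideanSpace ℝ (Fin d)) × (EuclideanSpace ℝ (Fin n)))

instance (d n : ℕ) : MeasurableSpace (PD d n) :=
  MeasurableSpace.comap (WithLp.equiv 2 _) inferInstance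

/-- Primal component of a primal-dual point. -/
def px {d n : ℕ} (z : PD d n) : EuclideanSpace ℝ (Fin d) := (WithLp.equiv 2 _ z).1

/-- Dual component of a primal-dual point. -/
def py {d n : ℕ} (z : PD d n) : EuclideanSpace ℝ (Fin n) := (WithLp.equiv 2 _ z).2

/-- Pair a primal and a dual vector into a primal-dual point. -/
def pmk {d n : ℕ} (x : EuclideanSpace ℝ (Fin d)) (y : EuclideanSpace ℝ (Fin n)) : PD d n :=
  (WithLp.equiv 2 _).symm (x, y)

/-- `u` is a (convex) subgradient of `f` at `x`. -/
def IsSubgrad {d : ℕ} (f : EuclideanSpace ℝ (Fin d) → ℝ)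
    (x u : EuclideanSpace ℝ (Fin d)) : Prop :=
  ∀ y, f x + ⟪u, y - x⟫ ≤ f y

section Aux

variable {E : Type*} [NormedAddCommGroup E] [InnerProductSpace ℝ E]

lemma vi_of_min {Z : Set E} (hZ : Convex ℝ Z) {u p : E} (hp : p ∈ Z)
    (hmin : ∀ w ∈ Z, ‖p - u‖ ≤ ‖w - u‖) : ∀ w ∈ Z, ⟪u - p, w - p⟫ ≤ 0 := by
  haveI : Nonempty Z := ⟨⟨p, hp⟩⟩
  have heq : ‖u - p‖ = ⨅ w : Z, ‖u - w‖ := by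
    apply le_antisymm
    · exact le_ciInf fun w => by
        rw [norm_sub_rev u p, norm_sub_rev u (w : E)]; exact hmin w w.2
    · have hbdd : BddBelow (Set.range fun w : Z => ‖u - (w : E)‖) :=
        ⟨0, by rintro x ⟨w, rfl⟩; exact norm_nonneg _⟩
      exact ciInf_le hbdd ⟨p, hp⟩
  exact (norm_eq_iInf_iff_real_inner_le_zero hZ hp).mp heq

lemma inner3 (a b c : E) : 2 * ⟪a - b, b - c⟫ = ‖a - c‖ ^ 2 - ‖a - b‖ ^ 2 - ‖b - c‖ ^ 2 := by
  have h : a - c = (a - b) + (b - c) := by abel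
  rw [h, norm_add_sq_real]; ring

lemma step_ineq (A C P W g : E) (β τ : ℝ) (hβ : 0 < 1 - β) (hτ : 0 < τ)
    (hVI : ⟪(β • A + (1 - β) • C - τ • g) - P, W - P⟫ ≤ 0) :
    2 * τ * ⟪g, C - W⟫ ≤ β * ‖A - W‖ ^ 2 + (1 - β) * ‖C - W‖ ^ 2 - ‖P - W‖ ^ 2
      - β * ‖A - P‖ ^ 2 - ((1 - β) / 2) * ‖C - P‖ ^ 2 + (2 * τ ^ 2 / (1 - β)) * ‖g‖ ^ 2 := by
  have hvec : (β • A + (1 - β) • C - τ • g) - P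
      = β • (A - P) + (1 - β) • (C - P) - τ • g := by module
  rw [hvec] at hVI
  have hWP : (W - P) = -(P - W) := by abel
  rw [hWP, inner_neg_right, inner_sub_left, inner_add_left, real_inner_smul_left,
    real_inner_smul_left, real_inner_smul_left] at hVI
  have e1 := inner3 A P W
  have e2 := inner3 C P W
  have e4 : ⟪g, C - W⟫ = ⟪g, C - P⟫ + ⟪g, P - W⟫ := by
    rw [← inner_add_right]; congr 1; abel
  have e5 : ⟪g, C - P⟫ ≤ ‖g‖ * ‖C - P‖ := real_inner_le_norm g (C - P)
  have hdiv : (2 * τ ^ 2 / (1 - β)) * (1 - β) = 2 * τ ^ 2 :=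
    div_mul_cancel₀ _ (ne_of_gt hβ)
  have e6 : 2 * τ * (‖g‖ * ‖C - P‖) ≤ (2 * τ ^ 2 / (1 - β)) * ‖g‖ ^ 2
      + ((1 - β) / 2) * ‖C - P‖ ^ 2 := by
    nlinarith [sq_nonneg (2 * τ * ‖g‖ - (1 - β) * ‖C - P‖), hβ, hdiv,
      mul_pos hβ hβ, sq_nonneg ‖g‖, sq_nonneg ‖C - P‖]
  have e5' : 2 * τ * ⟪g, C - P⟫ ≤ 2 * τ * (‖g‖ * ‖C - P‖) := by
    have := mul_le_mul_of_nonneg_left e5 (le_of_lt (by linarith : (0:ℝ) < 2 * τ))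
    linarith
  nlinarith [hVI, e1, e2, e4, e5', e6]


lemma log_step (k : ℕ) : 1 / ((k:ℝ) + 2) ≤ Real.log ((k:ℝ) + 2) - Real.log ((k:ℝ) + 1) := by
  have h1 : (0:ℝ) < (k:ℝ) + 1 := by positivity
  have h2 : (0:ℝ) < (k:ℝ) + 2 := by positivity
  have h := Real.log_le_sub_one_of_pos (x := ((k:ℝ) + 1) / ((k:ℝ) + 2)) (by positivity)
  rw [Real.log_div h1.ne' h2.ne'] at h
  have h3 : ((k:ℝ) + 1) / ((k:ℝ) + 2) - 1 = -(1 / ((k:ℝ) + 2)) := by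
    rw [div_sub_one h2.ne']; ring_nf
  linarith

lemma tel_log (K : ℕ) :
    ∑ k ∈ Finset.range K, (Real.log ((k:ℝ) + 2) - Real.log ((k:ℝ) + 1))
      = Real.log ((K:ℝ) + 1) := by
  have h := Finset.sum_range_sub (fun k => Real.log ((k:ℝ) + 1)) K
  simp only [Nat.cast_add, Nat.cast_one, Nat.cast_zero] at h
  calc ∑ k ∈ Finset.range K, (Real.log ((k:ℝ) + 2) - Real.log ((k:ℝ) + 1))
      = ∑ k ∈ Finset.range K, (Real.log ((k:ℝ) + 1 + 1) - Real.log ((k:ℝ) + 1)) := by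
        apply Finset.sum_congr rfl; intro k _; congr 2; ring
    _ = Real.log ((K:ℝ) + 1) := by rw [h]; simp [Real.log_one]

end Aux

set_option maxHeartbeats 1000000 in
/-- Pathwise regret-type inequality (Lemma on variable parameters) for the
stochastic gradient descent–ascent iteration with Halpern anchoring applied to
the Lagrangian of a convex program, under the Blum–Gladyshev oracle model. -/
theorem gda_halpern_pathwise_bound
    {d n : ℕ} {Ω : Type*} [MeasurableSpace Ω] (μ : Measure Ω) [IsProbabilityMeasure μ]
    (f : EuclideanSpace ℝ (Fin d) → ℝ) (hf : ConvexOn ℝ Set.univ f)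
    (gc : Fin n → EuclideanSpace ℝ (Fin d) → ℝ) (hgc : ∀ i, ConvexOn ℝ Set.univ (gc i))
    (x₀ : EuclideanSpace ℝ (Fin d)) (y₀ : EuclideanSpace ℝ (Fin n)) (hy₀ : ∀ i, 0 ≤ y₀ i)
    (B G : ℝ) (hB : 0 < B) (hG : 0 < G)
    -- the stochastic oracle for the Lagrangian and its mean
    (Ft : PD d n → Ω → PD d n) (hFtmeas : Measurable (Function.uncurry Ft))
    (hFtL2 : ∀ z, MemLp (Ft z) 2 μ)
    (F : PD d n → PD d n) (hFdef : ∀ z, F z = ∫ ω, Ft z ω ∂μ)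
    (hform : ∀ z : PD d n, (∀ i, 0 ≤ py z i) →
      ∃ u : EuclideanSpace ℝ (Fin d), ∃ v : Fin n → EuclideanSpace ℝ (Fin d),
        IsSubgrad f (px z) u ∧ (∀ i, IsSubgrad (gc i) (px z) (v i)) ∧
        F z = pmk (u + ∑ i, py z i • v i)
          ((WithLp.equiv 2 (Fin n → ℝ)).symm fun i => -(gc i (px z))))
    (hBG : ∀ z : PD d n, (∀ i, 0 ≤ py z i) →
      ∫ ω, ‖Ft z ω‖ ^ 2 ∂μ ≤ B ^ 2 * ‖z - pmk x₀ y₀‖ ^ 2 + G ^ 2)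
    -- metric projection onto `Z = ℝ^d × ℝⁿ₊`
    (proj : PD d n → PD d n)
    (hprojZ : ∀ u, ∀ i, 0 ≤ py (proj u) i)
    (hproj : ∀ u, ∀ w : PD d n, (∀ i, 0 ≤ py w i) → ‖proj u - u‖ ≤ ‖w - u‖)
    -- parameters: `β_k = 1/(k+2)`, arbitrary positive step sizes
    (β τ : ℕ → ℝ) (hβ : ∀ k, β k = 1 / ((k : ℝ) + 2)) (hτ : ∀ k, 0 < τ k)
    -- an arbitrary realization of the samples, and the iterates along it
    (ωs : ℕ → Ω)
    (z : ℕ → PD d n) (hz0 : z 0 = pmk x₀ y₀)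
    (hzrec : ∀ k, z (k + 1)
      = proj (β k • pmk x₀ y₀ + (1 - β k) • z k - τ k • Ft (z k) (ωs k))) :
    ∀ zz : PD d n, (∀ i, 0 ≤ py zz i) → ∀ K : ℕ, 0 < K →
      ∑ k ∈ Finset.range K, 2 * τ k * ⟪F (z k), z k - zz⟫
          - (3 + Real.log ((K : ℝ) + 1)) * ‖zz - pmk x₀ y₀‖ ^ 2
        ≤ (∑ k ∈ Finset.range K,
              ((2 * τ k ^ 2 / (1 - β k)) * ‖Ft (z k) (ωs k)‖ ^ 2
                + 2 * τ k * ⟪F (z k) - Ft (z k) (ωs k), z k⟫))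
          + ‖∑ k ∈ Finset.range K, τ k • (F (z k) - Ft (z k) (ωs k))‖ ^ 2
          + 2 * ‖pmk x₀ y₀‖ ^ 2
          - ∑ k ∈ Finset.range K,
              (((1 - β k) / 2) * ‖z (k + 1) - z k‖ ^ 2
                + β k * ‖pmk x₀ y₀ - z (k + 1)‖ ^ 2) := by
  intro zz hzz K hK
  set z0 : PD d n := pmk x₀ y₀ with hz0def
  set Zs : Set (PD d n) := {w : PD d n | ∀ i, 0 ≤ py w i} with hZsdef
  have hZconv : Convex ℝ Zs := by
    intro a ha b hb s t hs ht _ i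
    have hlin : py (s • a + t • b) i = s * py a i + t * py b i := rfl
    simp only [Zs, Set.mem_setOf_eq] at ha hb ⊢
    rw [hlin]
    exact add_nonneg (mul_nonneg hs (ha i)) (mul_nonneg ht (hb i))
  have hVI : ∀ u : PD d n, ∀ w ∈ Zs, ⟪u - proj u, w - proj u⟫ ≤ 0 := fun u =>
    vi_of_min hZconv (hprojZ u) (fun w hw => hproj u w hw)
  have hβpos : ∀ k : ℕ, 0 < 1 - β k := by
    intro k
    rw [hβ k]
    have h2 : (0:ℝ) < (k:ℝ) + 2 := by positivity
    rw [sub_pos, div_lt_one h2]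
    linarith [Nat.cast_nonneg (α := ℝ) k]
  have hβnn : ∀ k : ℕ, 0 ≤ β k := by
    intro k; rw [hβ k]; positivity
  -- per-step inequality from the projection variational inequality
  have hstep : ∀ k : ℕ, 2 * τ k * ⟪Ft (z k) (ωs k), z k - zz⟫ ≤
      (Real.log ((k:ℝ) + 2) - Real.log ((k:ℝ) + 1)) * ‖zz - z0‖ ^ 2
      + (‖z k - zz‖ ^ 2 - ‖z (k + 1) - zz‖ ^ 2)
      + (2 * τ k ^ 2 / (1 - β k)) * ‖Ft (z k) (ωs k)‖ ^ 2
      - (((1 - β k) / 2) * ‖z (k + 1) - z k‖ ^ 2 + β k * ‖z0 - z (k + 1)‖ ^ 2) := by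
    intro k
    have hVIk : ⟪(β k • z0 + (1 - β k) • z k - τ k • Ft (z k) (ωs k)) - z (k + 1),
        zz - z (k + 1)⟫ ≤ 0 := by
      rw [hzrec k]
      exact hVI _ zz hzz
    have h := step_ineq z0 (z k) (z (k + 1)) zz (Ft (z k) (ωs k)) (β k) (τ k) (hβpos k) (hτ k) hVIk
    have hlg : β k ≤ Real.log ((k:ℝ) + 2) - Real.log ((k:ℝ) + 1) := by
      rw [hβ k]; exact log_step k
    have hn1 : ‖z0 - zz‖ = ‖zz - z0‖ := norm_sub_rev _ _
    have hn2 : ‖z k - z (k + 1)‖ = ‖z (k + 1) - z k‖ := norm_sub_rev _ _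
    rw [hn1, hn2] at h
    have hq : (0:ℝ) ≤ ‖zz - z0‖ ^ 2 := sq_nonneg _
    have hA : (0:ℝ) ≤ ‖z k - zz‖ ^ 2 := sq_nonneg _
    have h5 := mul_le_mul_of_nonneg_right hlg hq
    have h6 := mul_nonneg (hβnn k) hA
    nlinarith [h, h5, h6]
  have hsum := Finset.sum_le_sum (fun k (_ : k ∈ Finset.range K) => hstep k)
  -- split the right-hand sum
  rw [Finset.sum_sub_distrib, Finset.sum_add_distrib, Finset.sum_add_distrib,
    ← Finset.sum_mul, tel_log K,
    Finset.sum_range_sub' (fun k => ‖z k - zz‖ ^ 2) K] at hsum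
  have hA0 : ‖z 0 - zz‖ ^ 2 = ‖zz - z0‖ ^ 2 := by rw [hz0, norm_sub_rev]
  rw [hA0] at hsum
  -- hsum : ∑ 2τ⟪g, z k - zz⟫ ≤ log(K+1)*Q + (Q - ‖z K - zz‖²) + Sc - Spen
  -- noise decomposition
  have hsplit : ∀ k : ℕ, 2 * τ k * ⟪F (z k), z k - zz⟫
      = 2 * τ k * ⟪Ft (z k) (ωs k), z k - zz⟫ + 2 * τ k * ⟪F (z k) - Ft (z k) (ωs k), z k⟫
        - 2 * τ k * ⟪F (z k) - Ft (z k) (ωs k), zz⟫ := by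
    intro k
    have h1 : ⟪F (z k), z k - zz⟫ = ⟪Ft (z k) (ωs k), z k - zz⟫ + ⟪F (z k) - Ft (z k) (ωs k), z k - zz⟫ := by
      rw [← inner_add_left]
      congr 1
      abel
    have h2 : ⟪F (z k) - Ft (z k) (ωs k), z k - zz⟫
        = ⟪F (z k) - Ft (z k) (ωs k), z k⟫ - ⟪F (z k) - Ft (z k) (ωs k), zz⟫ := inner_sub_right _ _ _
    rw [h1, h2]; ring
  set S : PD d n := ∑ k ∈ Finset.range K, τ k • (F (z k) - Ft (z k) (ωs k)) with hSdef
  have hSsum : ∑ k ∈ Finset.range K, 2 * τ k * ⟪F (z k) - Ft (z k) (ωs k), zz⟫ = 2 * ⟪S, zz⟫ := by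
    rw [hSdef, sum_inner, Finset.mul_sum]
    apply Finset.sum_congr rfl
    intro k _
    rw [real_inner_smul_left]; ring
  have hSb : -(2 * ⟪S, zz⟫) ≤ ‖S‖ ^ 2 + 2 * ‖zz - z0‖ ^ 2 + 2 * ‖z0‖ ^ 2 := by
    have h1 := norm_add_sq_real S zz
    have h2 : ‖zz‖ ≤ ‖zz - z0‖ + ‖z0‖ := by
      have h := norm_add_le (zz - z0) z0
      simpa using h
    have h3 : ‖zz‖ ^ 2 ≤ (‖zz - z0‖ + ‖z0‖) ^ 2 :=
      pow_le_pow_left₀ (norm_nonneg zz) h2 2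
    have h4 : (‖zz - z0‖ + ‖z0‖) ^ 2 ≤ 2 * ‖zz - z0‖ ^ 2 + 2 * ‖z0‖ ^ 2 := by
      nlinarith [sq_nonneg (‖zz - z0‖ - ‖z0‖)]
    nlinarith [sq_nonneg ‖S + zz‖, h1, h3, h4]
  have hFsum : ∑ k ∈ Finset.range K, 2 * τ k * ⟪F (z k), z k - zz⟫
      = (∑ k ∈ Finset.range K, 2 * τ k * ⟪Ft (z k) (ωs k), z k - zz⟫)
        + (∑ k ∈ Finset.range K, 2 * τ k * ⟪F (z k) - Ft (z k) (ωs k), z k⟫)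
        - 2 * ⟪S, zz⟫ := by
    rw [← hSsum, ← Finset.sum_add_distrib, ← Finset.sum_sub_distrib]
    apply Finset.sum_congr rfl
    intro k _
    exact hsplit k
  have hsplitRHS : ∑ k ∈ Finset.range K,
        ((2 * τ k ^ 2 / (1 - β k)) * ‖Ft (z k) (ωs k)‖ ^ 2 + 2 * τ k * ⟪F (z k) - Ft (z k) (ωs k), z k⟫)
      = (∑ k ∈ Finset.range K, (2 * τ k ^ 2 / (1 - β k)) * ‖Ft (z k) (ωs k)‖ ^ 2)
        + (∑ k ∈ Finset.range K, 2 * τ k * ⟪F (z k) - Ft (z k) (ωs k), z k⟫) :=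
    Finset.sum_add_distrib
  have hAK : (0:ℝ) ≤ ‖z K - zz‖ ^ 2 := sq_nonneg _
  rw [hFsum, hsplitRHS]
  linarith [hsum, hSb, hAK]
end
end

section
/- Let f, g₁, …, g_n : ℝ^d → ℝ be convex and let (x*, y*) ∈ ℝ^d × ℝⁿ₊ be a saddle point of the Lagrangian L(x,y) = f(x) + Σᵢ yᵢ gᵢ(x) over ℝ^d × ℝⁿ₊. Let z_k = (x_k, y_k) ∈ ℝ^d × ℝⁿ₊, k = 0, …, K−1, be any points, let τ_0, …, τ_{K−1} > 0, and let F(z_k) = (u_k + Σᵢ y_{k,i} v_{k,i}, −(g₁(x_k), …, g_n(x_k))) where u_k ∈ ∂f(x_k) and v_{k,i} ∈ ∂gᵢ(x_k). Suppose there are constants c_K, d_K > 0 such that for all z = (x, y) ∈ ℝ^d × ℝⁿ₊: (Σ_{i=0}^{K−1} τ_i)^{-1} · Σ_{k=0}^{K−1} τ_k·⟨F(z_k), z_k − z⟩ − c_K‖z − z₀‖² ≤ d_K, where z₀ = (x₀, y₀) ∈ ℝ^d × ℝⁿ₊ is fixed. Then, with x_K^out = (Σ_{i=0}^{K−1} τ_i)^{-1}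 Σ_{i=0}^{K−1} τ_i x_i and 𝟙 ∈ ℝⁿ the all-ones vector: (i) |f(x_K^out) − f(x*)| ≤ c_K·(‖x* − x₀‖² + 2(‖y* − y₀‖² + ‖y*‖²) + ‖y₀‖²) + d_K, and (ii) Σ_{i=1}^{n} max(0, gᵢ(x_K^out)) ≤ c_K·(‖x* − x₀‖² + ‖y* + 𝟙 − y₀‖² + ‖y₀‖²) + d_K. -/
open scoped RealInnerProductSpace

noncomputable section

lemma pmk_sub {d n : ℕ} (a c : EuclideanSpace ℝ (Fin d)) (b e : EuclideanSpace ℝ (Fin n)) :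
    pmk a b - pmk c e = pmk (a - c) (b - e) := rfl

lemma pmk_norm_sq {d n : ℕ} (a : EuclideanSpace ℝ (Fin d)) (b : EuclideanSpace ℝ (Fin n)) :
    ‖pmk a b‖ ^ 2 = ‖a‖ ^ 2 + ‖b‖ ^ 2 :=
  WithLp.prod_norm_sq_eq_of_L2 _

lemma pmk_inner {d n : ℕ} (a c : EuclideanSpace ℝ (Fin d)) (b e : EuclideanSpace ℝ (Fin n)) :
    ⟪pmk a b, pmk c e⟫ = ⟪a, c⟫ + ⟪b, e⟫ :=
  WithLp.prod_inner_apply _ _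

lemma enorm_sq {n : ℕ} (w : EuclideanSpace ℝ (Fin n)) : ‖w‖ ^ 2 = ∑ i, (w i) ^ 2 := by
  rw [EuclideanSpace.norm_eq, Real.sq_sqrt (by positivity)]
  simp [sq_abs]

lemma einner_eq {n : ℕ} (a b : EuclideanSpace ℝ (Fin n)) : ⟪a, b⟫ = ∑ i, a i * b i := by
  simp [PiLp.inner_apply, RCLike.inner_apply, conj_trivial, mul_comm]

lemma myConvexOn_sum {d : ℕ} {ι : Type*} (t : Finset ι) (F : ι → EuclideanSpace ℝ (Fin d) → ℝ)
    (h : ∀ i ∈ t, ConvexOn ℝ Set.univ (F i)) :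
    ConvexOn ℝ Set.univ (fun x => ∑ i ∈ t, F i x) := by
  classical
  induction t using Finset.induction_on with
  | empty => simpa using convexOn_const 0 convex_univ
  | insert a s hx ih =>
    simp only [Finset.sum_insert hx]
    exact (h a (Finset.mem_insert_self a s)).add (ih fun i hi => h i (Finset.mem_insert_of_mem hi))


set_option maxHeartbeats 1000000 in
/-- Convex-duality lemma: a weighted regret bound against all of
`Z = ℝ^d × ℝⁿ₊` for the Lagrangian operator yields bounds on objective
suboptimality and on constraint infeasibility of the weighted primal average. -/
theorem duality_objective_and_feasibility_bounds
    {d n K : ℕ} (hK : 0 < K)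
    (f : EuclideanSpace ℝ (Fin d) → ℝ) (hf : ConvexOn ℝ Set.univ f)
    (gc : Fin n → EuclideanSpace ℝ (Fin d) → ℝ) (hgc : ∀ i, ConvexOn ℝ Set.univ (gc i))
    -- a saddle point of the Lagrangian over `ℝ^d × ℝⁿ₊`
    (xstar : EuclideanSpace ℝ (Fin d)) (ystar : EuclideanSpace ℝ (Fin n))
    (hystar : ∀ i, 0 ≤ ystar i)
    (hsaddle : ∀ (xx : EuclideanSpace ℝ (Fin d)) (yy : EuclideanSpace ℝ (Fin n)),
      (∀ i, 0 ≤ yy i) →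
        f xstar + ∑ i, yy i * gc i xstar ≤ f xstar + ∑ i, ystar i * gc i xstar
        ∧ f xstar + ∑ i, ystar i * gc i xstar ≤ f xx + ∑ i, ystar i * gc i xx)
    -- reference point
    (x₀ : EuclideanSpace ℝ (Fin d)) (y₀ : EuclideanSpace ℝ (Fin n)) (hy₀ : ∀ i, 0 ≤ y₀ i)
    -- arbitrary points, weights and subgradients
    (xk : Fin K → EuclideanSpace ℝ (Fin d)) (yk : Fin K → EuclideanSpace ℝ (Fin n))
    (hyk : ∀ k i, 0 ≤ yk k i)
    (τ : Fin K → ℝ) (hτ : ∀ k, 0 < τ k)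
    (u : Fin K → EuclideanSpace ℝ (Fin d)) (hu : ∀ k, IsSubgrad f (xk k) (u k))
    (v : Fin K → Fin n → EuclideanSpace ℝ (Fin d))
    (hv : ∀ k i, IsSubgrad (gc i) (xk k) (v k i))
    -- the assumed regret-type bound over all of `Z`
    (cK dK : ℝ) (hcK : 0 < cK) (hdK : 0 < dK)
    (hbound : ∀ (xx : EuclideanSpace ℝ (Fin d)) (yy : EuclideanSpace ℝ (Fin n)),
      (∀ i, 0 ≤ yy i) →
        (∑ i, τ i)⁻¹ *
            ∑ k, τ k *
              ⟪pmk (u k + ∑ i, yk k i • v k i)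
                  ((WithLp.equiv 2 (Fin n → ℝ)).symm fun i => -(gc i (xk k))),
                pmk (xk k) (yk k) - pmk xx yy⟫
          - cK * ‖pmk xx yy - pmk x₀ y₀‖ ^ 2 ≤ dK) :
    ∀ xout : EuclideanSpace ℝ (Fin d),
      xout = (∑ i, τ i)⁻¹ • ∑ i, τ i • xk i →
        |f xout - f xstar|
            ≤ cK * (‖xstar - x₀‖ ^ 2 + 2 * (‖ystar - y₀‖ ^ 2 + ‖ystar‖ ^ 2) + ‖y₀‖ ^ 2) + dK
          ∧ ∑ i : Fin n, max 0 (gc i xout)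
            ≤ cK * (‖xstar - x₀‖ ^ 2
                  + ‖ystar + (WithLp.equiv 2 (Fin n → ℝ)).symm (fun _ => 1) - y₀‖ ^ 2
                  + ‖y₀‖ ^ 2) + dK := by
  
  classical
  intro xout hxout
  have hne : Nonempty (Fin K) := ⟨⟨0, hK⟩⟩
  set T : ℝ := ∑ i, τ i with hTdef
  have hTpos : 0 < T := Finset.sum_pos (fun k _ => hτ k) Finset.univ_nonempty
  set L : EuclideanSpace ℝ (Fin d) → EuclideanSpace ℝ (Fin n) → ℝ :=
    fun x y => f x + ∑ i, y i * gc i x with hLdef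
  -- per-iterate monotonicity inequality
  have hstep : ∀ (k : Fin K) (x : EuclideanSpace ℝ (Fin d)) (y : EuclideanSpace ℝ (Fin n)),
      L (xk k) y - L x (yk k) ≤
        ⟪pmk (u k + ∑ i, yk k i • v k i)
            ((WithLp.equiv 2 (Fin n → ℝ)).symm fun i => -(gc i (xk k))),
          pmk (xk k) (yk k) - pmk x y⟫ := by
    intro k x y
    rw [pmk_sub, pmk_inner]
    have h1 : ⟪u k + ∑ i, yk k i • v k i, xk k - x⟫
        = ⟪u k, xk k - x⟫ + ∑ i, yk k i * ⟪v k i, xk k - x⟫ := by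
      rw [inner_add_left, sum_inner]
      congr 1
      exact Finset.sum_congr rfl fun i _ => real_inner_smul_left _ _ _
    have h2 : ⟪((WithLp.equiv 2 (Fin n → ℝ)).symm fun i => -(gc i (xk k)) :
          EuclideanSpace ℝ (Fin n)), yk k - y⟫
        = ∑ i, (-(gc i (xk k))) * (yk k i - y i) := by
      rw [einner_eq]
      simp [WithLp.equiv_symm_apply, PiLp.toLp_apply]
    rw [h1, h2]
    have hfu : f (xk k) - f x ≤ ⟪u k, xk k - x⟫ := by
      have h := hu k x
      have hneg : ⟪u k, x - xk k⟫ = -⟪u k, xk k - x⟫ := by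
        rw [← inner_neg_right]; congr 1; abel
      rw [hneg] at h; linarith
    have hgv : ∑ i, yk k i * (gc i (xk k) - gc i x) ≤ ∑ i, yk k i * ⟪v k i, xk k - x⟫ := by
      apply Finset.sum_le_sum
      intro i _
      have h := hv k i x
      have hneg : ⟪v k i, x - xk k⟫ = -⟪v k i, xk k - x⟫ := by
        rw [← inner_neg_right]; congr 1; abel
      rw [hneg] at h
      exact mul_le_mul_of_nonneg_left (by linarith) (hyk k i)
    have e1 : ∑ i, (-(gc i (xk k))) * (yk k i - y i)
        = (∑ i, y i * gc i (xk k)) - ∑ i, yk k i * gc i (xk k) := by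
      rw [← Finset.sum_sub_distrib]
      exact Finset.sum_congr rfl fun i _ => by ring
    have e2 : ∑ i, yk k i * (gc i (xk k) - gc i x)
        = (∑ i, yk k i * gc i (xk k)) - ∑ i, yk k i * gc i x := by
      rw [← Finset.sum_sub_distrib]
      exact Finset.sum_congr rfl fun i _ => by ring
    rw [e2] at hgv
    simp only [hLdef]
    linarith
  -- averaged bound
  have hB : ∀ (x : EuclideanSpace ℝ (Fin d)) (y : EuclideanSpace ℝ (Fin n)), (∀ i, 0 ≤ y i) →
      T⁻¹ * ∑ k, τ k * (L (xk k) y - L x (yk k))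
        ≤ cK * (‖x - x₀‖ ^ 2 + ‖y - y₀‖ ^ 2) + dK := by
    intro x y hy
    have hb := hbound x y hy
    rw [pmk_sub, pmk_norm_sq] at hb
    have hmono : ∑ k, τ k * (L (xk k) y - L x (yk k))
        ≤ ∑ k, τ k *
            ⟪pmk (u k + ∑ i, yk k i • v k i)
                ((WithLp.equiv 2 (Fin n → ℝ)).symm fun i => -(gc i (xk k))),
              pmk (xk k) (yk k) - pmk x y⟫ :=
      Finset.sum_le_sum fun k _ => mul_le_mul_of_nonneg_left (hstep k x y) (hτ k).le
    have := mul_le_mul_of_nonneg_left hmono (inv_nonneg.2 hTpos.le)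
    linarith
  -- Jensen
  have hJ : ∀ (y : EuclideanSpace ℝ (Fin n)), (∀ i, 0 ≤ y i) →
      L xout y ≤ T⁻¹ * ∑ k, τ k * L (xk k) y := by
    intro y hy
    have hconv : ConvexOn ℝ Set.univ (fun x => L x y) := by
      refine hf.add ?_
      exact myConvexOn_sum Finset.univ (fun i x => y i * gc i x)
        (fun i _ => by simpa [smul_eq_mul] using (hgc i).smul (hy i))
    have hcm := hconv.map_centerMass_le (t := Finset.univ) (w := τ) (p := xk)
      (fun k _ => (hτ k).le) hTpos (fun k _ => Set.mem_univ _)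
    simp only [Finset.centerMass, smul_eq_mul] at hcm
    rw [hxout]
    convert hcm using 2 <;> rfl
  -- g i xstar ≤ 0
  have hgle : ∀ i, gc i xstar ≤ 0 := by
    intro i
    set yy : EuclideanSpace ℝ (Fin n) :=
      (WithLp.equiv 2 (Fin n → ℝ)).symm (fun j => ystar j + if j = i then 1 else 0) with hyydef
    have hyy : ∀ j, 0 ≤ yy j := by
      intro j
      simp only [hyydef, WithLp.equiv_symm_apply, PiLp.toLp_apply]
      have := hystar j
      split_ifs <;> linarith
    have h := (hsaddle xstar yy hyy).1
    simp only [hyydef, WithLp.equiv_symm_apply, PiLp.toLp_apply] at h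
    have hsum : ∑ j, (ystar j + if j = i then 1 else 0) * gc j xstar
        = (∑ j, ystar j * gc j xstar) + gc i xstar := by
      simp only [add_mul, ite_mul, one_mul, zero_mul]
      rw [Finset.sum_add_distrib, Finset.sum_ite_eq' Finset.univ i (fun j => gc j xstar)]
      simp
    rw [hsum] at h
    linarith
  -- averaged dual term bound
  have hD : T⁻¹ * ∑ k, τ k * L xstar (yk k) ≤ f xstar := by
    have h1 : ∀ k : Fin K, L xstar (yk k) ≤ f xstar := by
      intro k
      have : ∑ i, yk k i * gc i xstar ≤ 0 :=
        Finset.sum_nonpos fun i _ => mul_nonpos_of_nonneg_of_nonpos (hyk k i) (hgle i)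
      simp only [hLdef]; linarith
    have h2 : ∑ k, τ k * L xstar (yk k) ≤ T * f xstar := by
      rw [hTdef, Finset.sum_mul]
      exact Finset.sum_le_sum fun k _ => mul_le_mul_of_nonneg_left (h1 k) (hτ k).le
    have := mul_le_mul_of_nonneg_left h2 (inv_nonneg.2 hTpos.le)
    rwa [← mul_assoc, inv_mul_cancel₀ hTpos.ne', one_mul] at this
  -- KEY inequality
  have hKEY : ∀ (y : EuclideanSpace ℝ (Fin n)), (∀ i, 0 ≤ y i) →
      f xout + (∑ i, y i * gc i xout) - f xstar
        ≤ cK * (‖xstar - x₀‖ ^ 2 + ‖y - y₀‖ ^ 2) + dK := by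
    intro y hy
    have hb := hB xstar y hy
    have hj := hJ y hy
    have hsplit : ∑ k, τ k * (L (xk k) y - L xstar (yk k))
        = (∑ k, τ k * L (xk k) y) - ∑ k, τ k * L xstar (yk k) := by
      rw [← Finset.sum_sub_distrib]
      exact Finset.sum_congr rfl fun k _ => by ring
    rw [hsplit, mul_sub] at hb
    have hLout : L xout y = f xout + ∑ i, y i * gc i xout := rfl
    rw [hLout] at hj
    linarith
  -- saddle consequences
  have hE : f xstar ≤ f xout + ∑ i, ystar i * gc i xout := by
    have h0 := hsaddle xout 0 (fun i => by simp)
    have hz : ∑ i, (0 : EuclideanSpace ℝ (Fin n)) i * gc i xstar = 0 := by simp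
    have h1 := h0.1
    rw [hz] at h1
    linarith [h0.2]
  constructor
  · -- objective bound
    rw [abs_sub_le_iff]
    constructor
    · have h := hKEY 0 (fun i => by simp)
      simp only [zero_sub, norm_neg] at h
      have hz : ∑ i, (0 : EuclideanSpace ℝ (Fin n)) i * gc i xout = 0 := by simp
      rw [hz] at h
      nlinarith [sq_nonneg ‖ystar - y₀‖, sq_nonneg ‖ystar‖, hcK.le]
    · have hy2 : ∀ i, (0:ℝ) ≤ (ystar + ystar) i := by
        intro i
        have := hystar i
        simp only [PiLp.add_apply]
        linarith
      have h := hKEY (ystar + ystar) hy2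
      have hsum2 : ∑ i, (ystar + ystar) i * gc i xout
          = 2 * ∑ i, ystar i * gc i xout := by
        rw [Finset.mul_sum]
        exact Finset.sum_congr rfl fun i _ => by simp [PiLp.add_apply]; ring
      rw [hsum2] at h
      have hnrm : ‖ystar + ystar - y₀‖ ^ 2 ≤ 2 * (‖ystar - y₀‖ ^ 2 + ‖ystar‖ ^ 2) := by
        have hle := norm_add_le (ystar - y₀) ystar
        have heq : ystar - y₀ + ystar = ystar + ystar - y₀ := by abel
        rw [heq] at hle
        have hsq := pow_le_pow_left₀ (norm_nonneg _) hle 2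
        nlinarith [sq_nonneg (‖ystar - y₀‖ - ‖ystar‖)]
      nlinarith [sq_nonneg ‖y₀‖, hcK.le]
  · -- feasibility bound
    set sv : EuclideanSpace ℝ (Fin n) :=
      (WithLp.equiv 2 (Fin n → ℝ)).symm (fun i => if 0 < gc i xout then 1 else 0) with hsvdef
    have hyv : ∀ i, (0:ℝ) ≤ (ystar + sv) i := by
      intro i
      simp only [PiLp.add_apply, hsvdef, WithLp.equiv_symm_apply, PiLp.toLp_apply]
      have := hystar i
      split_ifs <;> linarith
    have h := hKEY (ystar + sv) hyv
    have hsum3 : ∑ i, (ystar + sv) i * gc i xout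
        = (∑ i, ystar i * gc i xout) + ∑ i, max 0 (gc i xout) := by
      rw [← Finset.sum_add_distrib]
      refine Finset.sum_congr rfl fun i _ => ?_
      simp only [PiLp.add_apply, hsvdef, WithLp.equiv_symm_apply, PiLp.toLp_apply]
      split_ifs with hg
      · rw [max_eq_right hg.le]; ring
      · rw [max_eq_left (not_lt.1 hg)]; ring
    rw [hsum3] at h
    have hnrm : ‖ystar + sv - y₀‖ ^ 2
        ≤ ‖ystar + (WithLp.equiv 2 (Fin n → ℝ)).symm (fun _ => 1) - y₀‖ ^ 2 + ‖y₀‖ ^ 2 := by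
      rw [enorm_sq, enorm_sq, enorm_sq, ← Finset.sum_add_distrib]
      refine Finset.sum_le_sum fun i _ => ?_
      simp only [PiLp.sub_apply, PiLp.add_apply, hsvdef, WithLp.equiv_symm_apply, PiLp.toLp_apply]
      have h1 := hystar i
      have h2 := hy₀ i
      split_ifs <;> nlinarith
    nlinarith [hE, hcK.le]
end
end

section
/- Under the stochastic oracle model of the min-max residual setting (oracle unbiased, with BG-type variance bound with constants B, G relative to the anchor z₀, and mean-square L-Lipschitz), consider the STORM estimator update g_{k+1} = F̃(z_{k+1}, ξ_{k+1}) + (1 − α_k)(g_k − F̃(z_k, ξ_{k+1})), where α_k ∈ (0, 1] and ξ_{k+1} is a fresh sample with law ν independent of (z_k, z_{k+1}, g_k). Then for every k ≥ 0: (α_k/2)·E‖g_k − F(z_k)‖² ≤ (1 − α_k/2)·E‖g_k − F(z_k)‖² − E‖g_{k+1} − F(z_{k+1})‖² + 2L²·E‖z_{k+1} − z_k‖² + 2α_k²·(B²·E‖z_k − z₀‖² + G²). -/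
open MeasureTheory
open scoped RealInnerProductSpace

lemma storm_aux_second_moment {Ξ : Type*} [MeasurableSpace Ξ] (ν : Measure Ξ)
    [IsProbabilityMeasure ν] {E : Type*} [NormedAddCommGroup E] [InnerProductSpace ℝ E]
    [CompleteSpace E]
    (X : Ξ → E) (hX : MemLp X 2 ν) :
    ∫ ξ, ‖X ξ - ∫ η, X η ∂ν‖ ^ 2 ∂ν = (∫ ξ, ‖X ξ‖ ^ 2 ∂ν) - ‖∫ η, X η ∂ν‖ ^ 2 := by
  set c := ∫ η, X η ∂ν with hc
  have hXi : Integrable X ν := hX.integrable one_le_two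
  have h2 : Integrable (fun ξ => ‖X ξ‖ ^ 2) ν := hX.norm.integrable_sq
  have hinner : Integrable (fun ξ => ⟪c, X ξ⟫) ν := hXi.const_inner c
  have hpt : ∀ ξ, ‖X ξ - c‖ ^ 2 = ‖X ξ‖ ^ 2 - 2 * ⟪c, X ξ⟫ + ‖c‖ ^ 2 := by
    intro ξ
    have := norm_add_sq_real (X ξ) (-c)
    simp only [norm_neg, inner_neg_right] at this
    rw [sub_eq_add_neg]
    rw [this, real_inner_comm]
    ring
  calc ∫ ξ, ‖X ξ - c‖ ^ 2 ∂ν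
      = ∫ ξ, (‖X ξ‖ ^ 2 - 2 * ⟪c, X ξ⟫ + ‖c‖ ^ 2) ∂ν := by
        exact integral_congr_ae (Filter.Eventually.of_forall hpt)
    _ = (∫ ξ, ‖X ξ‖ ^ 2 ∂ν) - 2 * ⟪c, c⟫ + ‖c‖ ^ 2 := by
        have hsub : Integrable (fun ξ => ‖X ξ‖ ^ 2 - 2 * ⟪c, X ξ⟫) ν := h2.sub (hinner.const_mul 2)
        rw [integral_add hsub (integrable_const _),
          integral_sub h2 (hinner.const_mul 2), MeasureTheory.integral_const_mul, integral_inner hXi,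
          integral_const]
        simp [← hc]
    _ = (∫ ξ, ‖X ξ‖ ^ 2 ∂ν) - ‖c‖ ^ 2 := by
        rw [real_inner_self_eq_norm_sq]; ring


set_option maxHeartbeats 2000000

/-- One-step recursion for the STORM variance-reduced estimator under the
Blum–Gladyshev-type variance bound and mean-square Lipschitzness of the
oracle: the fresh sample `ξ_{k+1}` is modeled by the second factor of a
product probability space. -/
theorem storm_one_step
    {m : ℕ} {W Ξ : Type*} [MeasurableSpace W] [MeasurableSpace Ξ]
    (P : Measure W) [IsProbabilityMeasure P]
    (ν : Measure Ξ) [IsProbabilityMeasure ν]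
    (z₀ : EuclideanSpace ℝ (Fin m))
    (F : EuclideanSpace ℝ (Fin m) → EuclideanSpace ℝ (Fin m)) (hFmeas : Measurable F)
    (B G L : ℝ) (hB : 0 < B) (hG : 0 < G) (hL : 0 < L)
    -- the stochastic oracle: unbiased, (BG)-type variance, mean-square Lipschitz
    (Ft : EuclideanSpace ℝ (Fin m) → Ξ → EuclideanSpace ℝ (Fin m))
    (hFtmeas : Measurable (Function.uncurry Ft))
    (hFtL2 : ∀ z, MemLp (Ft z) 2 ν)
    (hmean : ∀ z, ∫ ξ, Ft z ξ ∂ν = F z)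
    (hvar : ∀ z, ∫ ξ, ‖Ft z ξ - F z‖ ^ 2 ∂ν ≤ B ^ 2 * ‖z - z₀‖ ^ 2 + G ^ 2)
    (hmslip : ∀ u v, ∫ ξ, ‖Ft u ξ - Ft v ξ‖ ^ 2 ∂ν ≤ L ^ 2 * ‖u - v‖ ^ 2)
    -- the random vectors measurable with respect to the past
    (zk zk1 gk : W → EuclideanSpace ℝ (Fin m))
    (hzkmeas : Measurable zk) (hzk1meas : Measurable zk1) (hgkmeas : Measurable gk)
    (hzkL2 : MemLp zk 2 P) (hzk1L2 : MemLp zk1 2 P) (hgkL2 : MemLp gk 2 P)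
    (α : ℝ) (hα : α ∈ Set.Ioc (0 : ℝ) 1)
    -- the STORM update, on the product of the past with the fresh sample
    (gk1 : W × Ξ → EuclideanSpace ℝ (Fin m))
    (hgk1 : ∀ p : W × Ξ, gk1 p = Ft (zk1 p.1) p.2 + (1 - α) • (gk p.1 - Ft (zk p.1) p.2)) :
    (α / 2) * ∫ w, ‖gk w - F (zk w)‖ ^ 2 ∂P
      ≤ (1 - α / 2) * (∫ w, ‖gk w - F (zk w)‖ ^ 2 ∂P)
        - (∫ p, ‖gk1 p - F (zk1 p.1)‖ ^ 2 ∂(P.prod ν))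
        + 2 * L ^ 2 * (∫ w, ‖zk1 w - zk w‖ ^ 2 ∂P)
        + 2 * α ^ 2 * (B ^ 2 * (∫ w, ‖zk w - z₀‖ ^ 2 ∂P) + G ^ 2) := by
  obtain ⟨hα0, hα1⟩ := hα
  -- the mean of the centered oracle is zero
  have hcent : ∀ z : EuclideanSpace ℝ (Fin m),
      ∫ ξ, (Ft z ξ - F z) ∂ν = 0 := by
    intro z
    rw [integral_sub ((hFtL2 z).integrable one_le_two) (integrable_const _), hmean,
      integral_const]
    simp
  -- F is L-Lipschitz in the squared sense
  have hFsq : ∀ u v, ‖F u - F v‖ ^ 2 ≤ L ^ 2 * ‖u - v‖ ^ 2 := by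
    intro u v
    have hT : MemLp (fun ξ => Ft u ξ - Ft v ξ) 2 ν := (hFtL2 u).sub (hFtL2 v)
    have hTm : ∫ ξ, (Ft u ξ - Ft v ξ) ∂ν = F u - F v := by
      rw [integral_sub ((hFtL2 u).integrable one_le_two) ((hFtL2 v).integrable one_le_two),
        hmean, hmean]
    have h := storm_aux_second_moment ν _ hT
    rw [hTm] at h
    have hnn : (0:ℝ) ≤ ∫ ξ, ‖(Ft u ξ - Ft v ξ) - (F u - F v)‖ ^ 2 ∂ν :=
      integral_nonneg fun ξ => by positivity
    have := hmslip u v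
    linarith
  -- key pointwise (in w) bound
  have key : ∀ u v g : EuclideanSpace ℝ (Fin m),
      ∫ ξ, ‖Ft u ξ + (1 - α) • (g - Ft v ξ) - F u‖ ^ 2 ∂ν
        ≤ (1 - α) * ‖g - F v‖ ^ 2 + 2 * L ^ 2 * ‖u - v‖ ^ 2
          + 2 * α ^ 2 * B ^ 2 * ‖v - z₀‖ ^ 2 + 2 * α ^ 2 * G ^ 2 := by
    intro u v g
    set a : EuclideanSpace ℝ (Fin m) := (1 - α) • (g - F v) with ha
    set D : Ξ → EuclideanSpace ℝ (Fin m) :=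
      fun ξ => (Ft u ξ - F u) - (1 - α) • (Ft v ξ - F v) with hD
    have hDmem : MemLp D 2 ν :=
      ((hFtL2 u).sub (memLp_const (F u))).sub (((hFtL2 v).sub (memLp_const (F v))).const_smul (1 - α))
    have hDint : Integrable D ν := hDmem.integrable one_le_two
    have hDmean : ∫ ξ, D ξ ∂ν = 0 := by
      have h1 : Integrable (fun ξ => Ft u ξ - F u) ν :=
        ((hFtL2 u).integrable one_le_two).sub (integrable_const _)
      have h2 : Integrable (fun ξ => (1 - α) • (Ft v ξ - F v)) ν :=
        (((hFtL2 v).integrable one_le_two).sub (integrable_const (F v))).smul (1 - α)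
      calc ∫ ξ, D ξ ∂ν
          = (∫ ξ, (Ft u ξ - F u) ∂ν) - ∫ ξ, (1 - α) • (Ft v ξ - F v) ∂ν :=
            integral_sub h1 h2
        _ = 0 := by rw [integral_smul, hcent, hcent]; simp
    have hident : ∀ ξ, Ft u ξ + (1 - α) • (g - Ft v ξ) - F u = a + D ξ := by
      intro ξ; rw [ha, hD]; module
    -- split the integral
    have hDn2 : Integrable (fun ξ => ‖D ξ‖ ^ 2) ν := hDmem.norm.integrable_sq
    have hin : Integrable (fun ξ => ⟪a, D ξ⟫) ν := hDint.const_inner a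
    have hsplit : ∫ ξ, ‖Ft u ξ + (1 - α) • (g - Ft v ξ) - F u‖ ^ 2 ∂ν
        = ‖a‖ ^ 2 + ∫ ξ, ‖D ξ‖ ^ 2 ∂ν := by
      have hpt : ∀ ξ, ‖Ft u ξ + (1 - α) • (g - Ft v ξ) - F u‖ ^ 2
          = ‖a‖ ^ 2 + 2 * ⟪a, D ξ⟫ + ‖D ξ‖ ^ 2 := by
        intro ξ; rw [hident ξ, norm_add_sq_real]
      rw [integral_congr_ae (Filter.Eventually.of_forall hpt)]
      have hsum : Integrable (fun ξ => ‖a‖ ^ 2 + 2 * ⟪a, D ξ⟫) ν :=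
        (integrable_const _).add (hin.const_mul 2)
      rw [integral_add hsum hDn2, integral_add (integrable_const _) (hin.const_mul 2),
        MeasureTheory.integral_const_mul, integral_inner hDint, hDmean, integral_const]
      simp
    -- bound ∫‖D‖²
    set Ee : Ξ → EuclideanSpace ℝ (Fin m) :=
      fun ξ => (Ft u ξ - Ft v ξ) - (F u - F v) with hEe
    set S : Ξ → EuclideanSpace ℝ (Fin m) := fun ξ => Ft v ξ - F v with hS
    have hEmem : MemLp Ee 2 ν := ((hFtL2 u).sub (hFtL2 v)).sub (memLp_const _)
    have hSmem : MemLp S 2 ν := (hFtL2 v).sub (memLp_const _)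
    have hEn2 : Integrable (fun ξ => ‖Ee ξ‖ ^ 2) ν := hEmem.norm.integrable_sq
    have hSn2 : Integrable (fun ξ => ‖S ξ‖ ^ 2) ν := hSmem.norm.integrable_sq
    have hDpt : ∀ ξ, ‖D ξ‖ ^ 2 ≤ 2 * ‖Ee ξ‖ ^ 2 + 2 * α ^ 2 * ‖S ξ‖ ^ 2 := by
      intro ξ
      have hD' : D ξ = Ee ξ + α • S ξ := by rw [hD, hEe, hS]; module
      rw [hD']
      have h1 := norm_add_le (Ee ξ) (α • S ξ)
      have h2 : ‖α • S ξ‖ = |α| * ‖S ξ‖ := by rw [norm_smul, Real.norm_eq_abs]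
      rw [abs_of_pos hα0] at h2
      nlinarith [norm_nonneg (Ee ξ), norm_nonneg (S ξ), norm_nonneg (Ee ξ + α • S ξ),
        sq_nonneg (‖Ee ξ‖ - α * ‖S ξ‖)]
    have hDbound : ∫ ξ, ‖D ξ‖ ^ 2 ∂ν
        ≤ 2 * (∫ ξ, ‖Ee ξ‖ ^ 2 ∂ν) + 2 * α ^ 2 * ∫ ξ, ‖S ξ‖ ^ 2 ∂ν := by
      have hrhs : Integrable (fun ξ => 2 * ‖Ee ξ‖ ^ 2 + 2 * α ^ 2 * ‖S ξ‖ ^ 2) ν :=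
        (hEn2.const_mul 2).add (hSn2.const_mul _)
      calc ∫ ξ, ‖D ξ‖ ^ 2 ∂ν ≤ ∫ ξ, (2 * ‖Ee ξ‖ ^ 2 + 2 * α ^ 2 * ‖S ξ‖ ^ 2) ∂ν :=
            integral_mono hDn2 hrhs hDpt
        _ = 2 * (∫ ξ, ‖Ee ξ‖ ^ 2 ∂ν) + 2 * α ^ 2 * ∫ ξ, ‖S ξ‖ ^ 2 ∂ν := by
            rw [integral_add (hEn2.const_mul 2) (hSn2.const_mul _),
              MeasureTheory.integral_const_mul, MeasureTheory.integral_const_mul]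
    have hEbound : ∫ ξ, ‖Ee ξ‖ ^ 2 ∂ν ≤ L ^ 2 * ‖u - v‖ ^ 2 := by
      have hT : MemLp (fun ξ => Ft u ξ - Ft v ξ) 2 ν := (hFtL2 u).sub (hFtL2 v)
      have hTm : ∫ ξ, (Ft u ξ - Ft v ξ) ∂ν = F u - F v := by
        rw [integral_sub ((hFtL2 u).integrable one_le_two) ((hFtL2 v).integrable one_le_two),
          hmean, hmean]
      have h := storm_aux_second_moment ν _ hT
      rw [hTm] at h
      have h2 : ∫ ξ, ‖Ee ξ‖ ^ 2 ∂ν = ∫ ξ, ‖(Ft u ξ - Ft v ξ) - (F u - F v)‖ ^ 2 ∂ν := rfl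
      have := hmslip u v
      have hnn : (0:ℝ) ≤ ‖F u - F v‖ ^ 2 := by positivity
      rw [h2, h]
      linarith
    have hSbound : ∫ ξ, ‖S ξ‖ ^ 2 ∂ν ≤ B ^ 2 * ‖v - z₀‖ ^ 2 + G ^ 2 := hvar v
    have hanorm : ‖a‖ ^ 2 ≤ (1 - α) * ‖g - F v‖ ^ 2 := by
      rw [ha, norm_smul, Real.norm_eq_abs, abs_of_nonneg (by linarith : (0:ℝ) ≤ 1 - α),
        mul_pow]
      nlinarith [mul_nonneg (mul_nonneg hα0.le (sub_nonneg.mpr hα1)) (sq_nonneg ‖g - F v‖)]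
    rw [hsplit]
    have h1 : 2 * α ^ 2 * (∫ ξ, ‖S ξ‖ ^ 2 ∂ν) ≤ 2 * α ^ 2 * (B ^ 2 * ‖v - z₀‖ ^ 2 + G ^ 2) :=
      mul_le_mul_of_nonneg_left hSbound (by positivity)
    have h2 : 2 * (∫ ξ, ‖Ee ξ‖ ^ 2 ∂ν) ≤ 2 * (L ^ 2 * ‖u - v‖ ^ 2) :=
      mul_le_mul_of_nonneg_left hEbound (by norm_num)
    linarith
  -- measurability of the product integrand
  have hgk1fun : gk1 = fun p : W × Ξ =>
      Ft (zk1 p.1) p.2 + (1 - α) • (gk p.1 - Ft (zk p.1) p.2) := funext hgk1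
  have hm1 : Measurable (fun p : W × Ξ => Ft (zk1 p.1) p.2) :=
    hFtmeas.comp ((hzk1meas.comp measurable_fst).prodMk measurable_snd)
  have hm2 : Measurable (fun p : W × Ξ => Ft (zk p.1) p.2) :=
    hFtmeas.comp ((hzkmeas.comp measurable_fst).prodMk measurable_snd)
  have hm3 : Measurable gk1 := by
    rw [hgk1fun]
    exact hm1.add (((hgkmeas.comp measurable_fst).sub hm2).const_smul (1 - α))
  have hfmeas : Measurable (fun p : W × Ξ => ‖gk1 p - F (zk1 p.1)‖ ^ 2) :=
    ((hm3.sub (hFmeas.comp (hzk1meas.comp measurable_fst))).norm.pow_const 2)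
  -- slices are in L², hence the squared norm is ν-integrable for each w
  have hslice : ∀ w, MemLp (fun ξ => gk1 (w, ξ) - F (zk1 w)) 2 ν := by
    intro w
    have hrw : (fun ξ => gk1 (w, ξ) - F (zk1 w)) = fun ξ =>
        Ft (zk1 w) ξ + (1 - α) • (gk w - Ft (zk w) ξ) - F (zk1 w) := by
      funext ξ; rw [hgk1 (w, ξ)]
    rw [hrw]
    exact ((hFtL2 (zk1 w)).add
      (((memLp_const (gk w)).sub (hFtL2 (zk w))).const_smul (1 - α))).sub (memLp_const (F (zk1 w)))
  have hsliceint : ∀ w, Integrable (fun ξ => ‖gk1 (w, ξ) - F (zk1 w)‖ ^ 2) ν :=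
    fun w => (hslice w).norm.integrable_sq
  -- define the per-w bound φ
  set φ : W → ℝ := fun w => (1 - α) * ‖gk w - F (zk w)‖ ^ 2
      + 2 * L ^ 2 * ‖zk1 w - zk w‖ ^ 2
      + 2 * α ^ 2 * B ^ 2 * ‖zk w - z₀‖ ^ 2 + 2 * α ^ 2 * G ^ 2 with hφ
  have hφbound : ∀ w, ∫ ξ, ‖gk1 (w, ξ) - F (zk1 w)‖ ^ 2 ∂ν ≤ φ w := by
    intro w
    have hrw : (fun ξ => ‖gk1 (w, ξ) - F (zk1 w)‖ ^ 2)
        = fun ξ => ‖Ft (zk1 w) ξ + (1 - α) • (gk w - Ft (zk w) ξ) - F (zk1 w)‖ ^ 2 := by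
      funext ξ; rw [hgk1 (w, ξ)]
    rw [hrw, hφ]
    exact key (zk1 w) (zk w) (gk w)
  -- integrability of φ over P
  have hFzk : MemLp (fun w => F (zk w)) 2 P := by
    have hdom : MemLp (fun w => ‖F z₀‖ + L * ‖zk w - z₀‖) 2 P :=
      (memLp_const ‖F z₀‖).add ((hzkL2.sub (memLp_const z₀)).norm.const_mul L)
    refine hdom.of_le (hFmeas.comp hzkmeas).aestronglyMeasurable ?_
    filter_upwards with w
    have h1 : ‖F (zk w) - F z₀‖ ≤ L * ‖zk w - z₀‖ := by
      have hsq := hFsq (zk w) z₀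
      have hb : L ^ 2 * ‖zk w - z₀‖ ^ 2 = (L * ‖zk w - z₀‖) ^ 2 := by ring
      rw [hb] at hsq
      exact (pow_le_pow_iff_left₀ (norm_nonneg _)
        (mul_nonneg hL.le (norm_nonneg _)) (by norm_num)).mp hsq
    have h2 : ‖F (zk w)‖ ≤ ‖F z₀‖ + ‖F (zk w) - F z₀‖ := by
      have : F (zk w) = F z₀ + (F (zk w) - F z₀) := by abel
      calc ‖F (zk w)‖ = ‖F z₀ + (F (zk w) - F z₀)‖ := by rw [← this]
        _ ≤ ‖F z₀‖ + ‖F (zk w) - F z₀‖ := norm_add_le _ _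
    have h3 : ‖F z₀‖ + L * ‖zk w - z₀‖ ≤ ‖(‖F z₀‖ + L * ‖zk w - z₀‖ : ℝ)‖ := by
      rw [Real.norm_eq_abs]; exact le_abs_self _
    linarith
  have hgFmem : MemLp (fun w => gk w - F (zk w)) 2 P := hgkL2.sub hFzk
  have hA : Integrable (fun w => ‖gk w - F (zk w)‖ ^ 2) P := hgFmem.norm.integrable_sq
  have hZ : Integrable (fun w => ‖zk1 w - zk w‖ ^ 2) P := (hzk1L2.sub hzkL2).norm.integrable_sq
  have hC : Integrable (fun w => ‖zk w - z₀‖ ^ 2) P :=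
    (hzkL2.sub (memLp_const _)).norm.integrable_sq
  have hφint : Integrable φ P := by
    rw [hφ]
    exact (((hA.const_mul _).add (hZ.const_mul _)).add (hC.const_mul _)).add (integrable_const _)
  have hφnn : ∀ w, 0 ≤ φ w := by
    intro w; simp only [hφ]
    have h1α : (0:ℝ) ≤ 1 - α := by linarith
    have := sq_nonneg ‖gk w - F (zk w)‖
    have := sq_nonneg ‖zk1 w - zk w‖
    have := sq_nonneg ‖zk w - z₀‖
    have h4 : (0:ℝ) ≤ 2 * α ^ 2 * B ^ 2 := by positivity
    have h5 : (0:ℝ) ≤ 2 * α ^ 2 * G ^ 2 := by positivity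
    have h6 : (0:ℝ) ≤ 2 * L ^ 2 := by positivity
    nlinarith [mul_nonneg h1α (sq_nonneg ‖gk w - F (zk w)‖),
      mul_nonneg h6 (sq_nonneg ‖zk1 w - zk w‖),
      mul_nonneg h4 (sq_nonneg ‖zk w - z₀‖)]
  -- the Fubini/Tonelli step
  have hY : ∫ p, ‖gk1 p - F (zk1 p.1)‖ ^ 2 ∂(P.prod ν) ≤ ∫ w, φ w ∂P := by
    have hnn : 0 ≤ᶠ[ae (P.prod ν)] fun p => ‖gk1 p - F (zk1 p.1)‖ ^ 2 :=
      Filter.Eventually.of_forall fun p => by positivity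
    rw [integral_eq_lintegral_of_nonneg_ae hnn hfmeas.aestronglyMeasurable]
    rw [lintegral_prod _ hfmeas.ennreal_ofReal.aemeasurable]
    have hb : ∫⁻ w, ∫⁻ ξ, ENNReal.ofReal (‖gk1 (w, ξ) - F (zk1 w)‖ ^ 2) ∂ν ∂P
        ≤ ∫⁻ w, ENNReal.ofReal (φ w) ∂P := by
      apply lintegral_mono
      intro w
      refine le_trans (le_of_eq ?_) (ENNReal.ofReal_le_ofReal (hφbound w))
      exact (ofReal_integral_eq_lintegral_ofReal (hsliceint w)
        (Filter.Eventually.of_forall fun ξ => by positivity)).symm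
    have heq : ∫⁻ w, ENNReal.ofReal (φ w) ∂P = ENNReal.ofReal (∫ w, φ w ∂P) :=
      (ofReal_integral_eq_lintegral_ofReal hφint (Filter.Eventually.of_forall hφnn)).symm
    rw [heq] at hb
    exact le_trans (ENNReal.toReal_mono ENNReal.ofReal_ne_top hb)
      (le_of_eq (ENNReal.toReal_ofReal (integral_nonneg hφnn)))
  -- expand ∫ φ
  have hφeq : ∫ w, φ w ∂P = (1 - α) * (∫ w, ‖gk w - F (zk w)‖ ^ 2 ∂P)
      + 2 * L ^ 2 * (∫ w, ‖zk1 w - zk w‖ ^ 2 ∂P)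
      + 2 * α ^ 2 * B ^ 2 * (∫ w, ‖zk w - z₀‖ ^ 2 ∂P) + 2 * α ^ 2 * G ^ 2 := by
    rw [hφ]
    have i1 : Integrable (fun w => (1 - α) * ‖gk w - F (zk w)‖ ^ 2) P := hA.const_mul _
    have i2 : Integrable (fun w => 2 * L ^ 2 * ‖zk1 w - zk w‖ ^ 2) P := hZ.const_mul _
    have i3 : Integrable (fun w => 2 * α ^ 2 * B ^ 2 * ‖zk w - z₀‖ ^ 2) P := hC.const_mul _
    have i12 : Integrable (fun w => (1 - α) * ‖gk w - F (zk w)‖ ^ 2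
        + 2 * L ^ 2 * ‖zk1 w - zk w‖ ^ 2) P := i1.add i2
    have i123 : Integrable (fun w => (1 - α) * ‖gk w - F (zk w)‖ ^ 2
        + 2 * L ^ 2 * ‖zk1 w - zk w‖ ^ 2 + 2 * α ^ 2 * B ^ 2 * ‖zk w - z₀‖ ^ 2) P := i12.add i3
    rw [integral_add i123 (integrable_const _),
      integral_add i12 i3,
      integral_add i1 i2,
      MeasureTheory.integral_const_mul, MeasureTheory.integral_const_mul,
      MeasureTheory.integral_const_mul, integral_const]
    simp
  have hfinal := hY.trans_eq hφeq
  linarith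
end

section
/- Let Q ∈ ℝ^{d×d} be symmetric positive semidefinite, c ∈ ℝ^d, and f(x) = (1/(2d))⟨x, Qx⟩ + ⟨c, x⟩, and consider the stochastic gradient oracle g(x, i) = Q_{:i} x_i + c with i uniform on {1, …, d}. Assume f attains a minimizer x* ∈ ℝ^d, and assume there exists x̄ ∈ ℝ^d with Q x̄ = 0 but Q_{:j} x̄_j ≠ 0 for some index j. Then the ABC condition fails for this oracle: for every choice of constants a, b, c₀ ≥ 0 there exists x ∈ ℝ^d such that (1/d)Σ_{i=1}^{d} ‖Q_{:i} x_i + c‖² > c₀² + b²‖∇f(x)‖² + a²(f(x) − f(x*)). -/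
open scoped RealInnerProductSpace

lemma quad_eventually_pos (A B C : ℝ) (hA : 0 < A) :
    ∃ t : ℝ, 0 < A * t ^ 2 + B * t + C := by
  refine ⟨max 1 ((|B| + |C| + 1) / A), ?_⟩
  set t := max 1 ((|B| + |C| + 1) / A) with ht
  have ht1 : 1 ≤ t := le_max_left _ _
  have hAt : |B| + |C| + 1 ≤ A * t := by
    have h := le_max_right 1 ((|B| + |C| + 1) / A)
    rw [div_le_iff₀ hA] at h
    linarith [h.trans_eq (mul_comm _ A)]
  nlinarith [neg_abs_le B, neg_abs_le C, abs_nonneg B, abs_nonneg C,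
    mul_le_mul_of_nonneg_right hAt (by linarith : (0:ℝ) ≤ t)]

/-- For the quadratic `f(x) = (1/(2d))⟨x, Qx⟩ + ⟨c, x⟩` with the
column-sampling oracle `g(x,i) = Q_{:i} x_i + c`, if there is a point `x̄`
with `Q x̄ = 0` but `Q_{:j} x̄_j ≠ 0` for some `j`, then the ABC condition
fails: no constants `a, b, c₀ ≥ 0` make the oracle's second moment bounded by
`c₀² + b²‖∇f(x)‖² + a²(f(x) − f(x*))` for all `x`
(here `∇f(x) = (1/d) Q x + c`). -/
theorem quadratic_oracle_abc_fails
    {d : ℕ} (hd : 0 < d) (Q : Matrix (Fin d) (Fin d) ℝ)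
    (hQsymm : Q.IsSymm) (hQpsd : Q.PosSemidef)
    (c : EuclideanSpace ℝ (Fin d))
    (f : EuclideanSpace ℝ (Fin d) → ℝ)
    (hf : ∀ x, f x = (1 / (2 * (d : ℝ))) *
        ⟪x, (WithLp.equiv 2 (Fin d → ℝ)).symm (Q.mulVec fun j => x j)⟫ + ⟪c, x⟫)
    (g : EuclideanSpace ℝ (Fin d) → Fin d → EuclideanSpace ℝ (Fin d))
    (hg : ∀ x i, g x i
      = x i • (WithLp.equiv 2 (Fin d → ℝ)).symm (fun j => Q j i) + c)
    (xstar : EuclideanSpace ℝ (Fin d)) (hmin : ∀ y, f xstar ≤ f y)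
    (xbar : EuclideanSpace ℝ (Fin d))
    (hker : Q.mulVec (fun j => xbar j) = 0)
    (hcol : ∃ j : Fin d,
      xbar j • (WithLp.equiv 2 (Fin d → ℝ)).symm (fun j' => Q j' j) ≠ 0) :
    ∀ a b c₀ : ℝ, 0 ≤ a → 0 ≤ b → 0 ≤ c₀ →
      ∃ x : EuclideanSpace ℝ (Fin d),
        c₀ ^ 2
            + b ^ 2 * ‖(d : ℝ)⁻¹ •
                (WithLp.equiv 2 (Fin d → ℝ)).symm (Q.mulVec fun j => x j) + c‖ ^ 2
            + a ^ 2 * (f x - f xstar)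
          < (d : ℝ)⁻¹ * ∑ i, ‖g x i‖ ^ 2 := by
  intro a b c₀ ha hb hc₀
  have hdR : (0:ℝ) < (d:ℝ) := by exact_mod_cast hd
  set v : Fin d → EuclideanSpace ℝ (Fin d) :=
    fun i => xbar i • (WithLp.equiv 2 (Fin d → ℝ)).symm (fun j' => Q j' i) with hv
  -- kernel fact for scaled points
  have hkerT : ∀ t : ℝ, Q.mulVec (fun j => (t • xbar) j) = 0 := by
    intro t
    have h1 : (fun j => (t • xbar) j) = t • (fun j => xbar j) := by
      funext j; simp
    rw [h1, Matrix.mulVec_smul, hker, smul_zero]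
  -- f on the line
  have hfline : ∀ t : ℝ, f (t • xbar) = t * ⟪c, xbar⟫ := by
    intro t
    rw [hf, hkerT t]
    simp only [WithLp.equiv_symm_apply, WithLp.toLp_zero, inner_zero_right, mul_zero, zero_add]
    rw [real_inner_smul_right]
  -- inner product with c vanishes since f is bounded below on the line
  have hq0 : ⟪c, xbar⟫ = 0 := by
    by_contra h
    have h1 := hmin (((f xstar - 1) / ⟪c, xbar⟫) • xbar)
    rw [hfline, div_mul_cancel₀ _ h] at h1
    linarith
  -- f xstar ≤ 0
  have hf0 : f 0 = 0 := by
    have h0 : Q.mulVec (fun j => (0 : EuclideanSpace ℝ (Fin d)) j) = 0 := by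
      have : (fun j => (0 : EuclideanSpace ℝ (Fin d)) j) = (0 : Fin d → ℝ) := by
        funext j; simp
      rw [this, Matrix.mulVec_zero]
    rw [hf, h0]; simp
  have hfs : f xstar ≤ 0 := hf0 ▸ hmin 0
  -- second moment on the line
  have hnormg : ∀ (t : ℝ) (i : Fin d),
      ‖g (t • xbar) i‖ ^ 2 = ‖v i‖ ^ 2 * t ^ 2 + (2 * ⟪v i, c⟫) * t + ‖c‖ ^ 2 := by
    intro t i
    rw [hg]
    have h1 : (t • xbar) i • (WithLp.equiv 2 (Fin d → ℝ)).symm (fun j' => Q j' i)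
        = t • v i := by
      rw [hv]
      show ((t • xbar) i) • _ = _
      rw [smul_smul]
      congr 1
    rw [h1, norm_add_sq_real, norm_smul, real_inner_smul_left]
    simp only [Real.norm_eq_abs, mul_pow, sq_abs]
    ring
  set S : ℝ := ∑ i, ‖v i‖ ^ 2 with hS
  set P : ℝ := ∑ i, ⟪v i, c⟫ with hP
  have hsum : ∀ t : ℝ, ∑ i, ‖g (t • xbar) i‖ ^ 2
      = S * t ^ 2 + (2 * P) * t + (d : ℝ) * ‖c‖ ^ 2 := by
    intro t
    rw [Finset.sum_congr rfl fun i _ => hnormg t i]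
    simp [Finset.sum_add_distrib, ← Finset.sum_mul, Finset.mul_sum, hS, hP]
  -- S > 0
  obtain ⟨j, hj⟩ := hcol
  have hSpos : 0 < S := by
    have hj2 : 0 < ‖v j‖ ^ 2 := pow_pos (norm_pos_iff.mpr hj) 2
    have hle := Finset.single_le_sum (f := fun i => ‖v i‖ ^ 2)
      (fun i _ => sq_nonneg _) (Finset.mem_univ j)
    rw [hS]; exact lt_of_lt_of_le hj2 hle
  -- choose t
  obtain ⟨t, htpos⟩ := quad_eventually_pos (S / d) (2 * P / d)
    (‖c‖ ^ 2 - (c₀ ^ 2 + b ^ 2 * ‖c‖ ^ 2 + a ^ 2 * (0 - f xstar)))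
    (div_pos hSpos hdR)
  refine ⟨t • xbar, ?_⟩
  have hgrad : (d : ℝ)⁻¹ •
      (WithLp.equiv 2 (Fin d → ℝ)).symm (Q.mulVec fun j => (t • xbar) j) + c = c := by
    rw [hkerT t]; simp
  rw [hgrad, hsum t, hfline t, hq0]
  have hdne : (d:ℝ) ≠ 0 := ne_of_gt hdR
  rw [div_mul_eq_mul_div, div_mul_eq_mul_div] at htpos
  have hexp : (d : ℝ)⁻¹ * (S * t ^ 2 + (2 * P) * t + (d : ℝ) * ‖c‖ ^ 2)
      = S * t ^ 2 / d + 2 * P * t / d + ‖c‖ ^ 2 := by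
    field_simp
  rw [hexp]
  linarith [htpos]
end
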